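/- arXiv:1109.6352 — 6 statements merged into one kernel-verified Lean document; each statement's English description precedes it below -/
import Mathlib

section
/- For every pair of integers (m₁,m₂) ∈ ℤ² with (m₁,m₂) ≠ (0,0), one has ∫₀^{2π} min{1, 1/|m₁ cos θ + m₂ sin θ|} dθ ≤ 2π (1 + log √(m₁² + m₂²)) / √(m₁² + m₂²). -/
open Real MeasureTheory intervalIntegral

lemma minIntble (f : ℝ → ℝ) (hf : Measurable f) (a b : ℝ) :
    IntervalIntegrable (fun x => min 1 |f x|⁻¹) volume a b := by
  rw [intervalIntegrable_iff]
  apply Measure.integrableOn_of_bounded (M := 1) measure_Ioc_lt_top.ne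
    (measurable_const.min hf.abs.inv).aestronglyMeasurable
  filter_upwards with x
  rw [Real.norm_eq_abs, abs_of_nonneg (le_min zero_le_one (inv_nonneg.mpr (abs_nonneg _)))]
  exact min_le_left _ _

lemma key (r : ℝ) (hr : 1 ≤ r) :
    (∫ θ in (0:ℝ)..(2 * π), min 1 |r * Real.cos θ|⁻¹) ≤
      2 * π * (1 + Real.log r) / r := by
  have hr0 : (0:ℝ) < r := lt_of_lt_of_le one_pos hr
  have hπ := Real.pi_pos
  set g : ℝ → ℝ := fun θ => min 1 |r * Real.cos θ|⁻¹ with hgdef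
  have hgint : ∀ a b : ℝ, IntervalIntegrable g volume a b :=
    minIntble _ (measurable_const.mul Real.measurable_cos)
  have hper : Function.Periodic g (2 * π) := fun x => by
    simp [hgdef, Real.cos_add_two_pi]
  -- reduce to [0, π/2]
  have h1 : (∫ θ in (0:ℝ)..(2 * π), g θ) = ∫ θ in (-π)..π, g θ := by
    have h := hper.intervalIntegral_add_eq (-π) 0
    rw [zero_add, show -π + 2 * π = π by ring] at h
    exact h.symm
  have h2 : (∫ θ in (-π)..(0:ℝ), g θ) = ∫ θ in (0:ℝ)..π, g θ := by
    have h := intervalIntegral.integral_comp_neg (a := -π) (b := 0) g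
    rw [neg_neg, neg_zero] at h
    rw [← h]
    apply intervalIntegral.integral_congr
    intro x _; simp [hgdef, Real.cos_neg]
  have h3 : (∫ θ in (π/2)..π, g θ) = ∫ θ in (0:ℝ)..(π/2), g θ := by
    have h := intervalIntegral.integral_comp_sub_left (a := 0) (b := π/2) g π
    rw [show π - π/2 = π/2 by ring, sub_zero] at h
    rw [← h]
    apply intervalIntegral.integral_congr
    intro x _
    simp [hgdef, Real.cos_pi_sub, abs_mul, abs_neg, mul_neg]
  have h4 : (∫ θ in (0:ℝ)..(2 * π), g θ) = 4 * ∫ θ in (0:ℝ)..(π/2), g θ := by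
    rw [h1, ← intervalIntegral.integral_add_adjacent_intervals (hgint (-π) 0) (hgint 0 π),
      h2, ← intervalIntegral.integral_add_adjacent_intervals (hgint 0 (π/2)) (hgint (π/2) π),
      h3]
    ring
  -- bound on [0, π/2]
  set B : ℝ → ℝ := fun u => min 1 |2 / π * r * u|⁻¹ with hBdef
  have hBint : ∀ a b : ℝ, IntervalIntegrable B volume a b :=
    minIntble _ ((measurable_const).mul measurable_id)
  have h5 : (∫ θ in (0:ℝ)..(π/2), g θ) ≤ ∫ θ in (0:ℝ)..(π/2), B (π/2 - θ) := by
    apply intervalIntegral.integral_mono_on (by positivity) (hgint 0 (π/2))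
    · have h := (hBint 0 (π/2)).comp_sub_left (π/2)
      rw [sub_self, sub_zero] at h
      exact h.symm
    · intro x hx
      obtain ⟨hx0, hx2⟩ := hx
      rcases eq_or_lt_of_le hx2 with h | h
      · simp [hgdef, hBdef, h, Real.cos_pi_div_two]
      · have hb : 0 < 2 / π * r * (π / 2 - x) := by
          apply mul_pos (by positivity); linarith
        have hcos : 2 / π * r * (π / 2 - x) ≤ r * Real.cos x := by
          have := Real.one_sub_mul_le_cos hx0 hx2
          have h2' : 2 / π * (π / 2 - x) ≤ Real.cos x := by
            rw [mul_sub] at *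
            rw [div_mul_eq_mul_div, mul_comm (2:ℝ) (π/2), mul_div_assoc]
            calc π / 2 * (2 / π) - 2 / π * x = 1 - 2 / π * x := by
                  field_simp
              _ ≤ Real.cos x := this
          calc 2 / π * r * (π / 2 - x) = r * (2 / π * (π / 2 - x)) := by ring
            _ ≤ r * Real.cos x := by
                apply mul_le_mul_of_nonneg_left h2' hr0.le
        have hrc : 2 / π * r * (π / 2 - x) ≤ |r * Real.cos x| := hcos.trans (le_abs_self _)
        simp only [hgdef, hBdef]
        apply min_le_min le_rfl
        rw [abs_of_pos hb]
        exact inv_anti₀ hb hrc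
  have h6 : (∫ θ in (0:ℝ)..(π/2), B (π/2 - θ)) = ∫ u in (0:ℝ)..(π/2), B u := by
    rw [intervalIntegral.integral_comp_sub_left B (π/2)]
    norm_num
  -- split the B integral at c = π / (2 r)
  set c : ℝ := π / (2 * r) with hcdef
  have hc0 : 0 < c := by positivity
  have hcle : c ≤ π / 2 := by
    rw [hcdef, div_le_div_iff₀ (by positivity) (by norm_num)]
    nlinarith
  have h7 : (∫ u in (0:ℝ)..c, B u) ≤ c := by
    calc (∫ u in (0:ℝ)..c, B u) ≤ ∫ u in (0:ℝ)..c, (1:ℝ) := by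
          apply intervalIntegral.integral_mono_on hc0.le (hBint 0 c)
            intervalIntegrable_const
          intro x _; exact min_le_left _ _
      _ = c := by simp
  have h8 : (∫ u in c..(π/2), B u) ≤ c * Real.log r := by
    have hint : IntervalIntegrable (fun u : ℝ => c * u⁻¹) volume c (π/2) := by
      apply IntervalIntegrable.const_mul
      refine intervalIntegrable_inv ?_ continuousOn_id
      intro x hx
      rcases Set.mem_uIcc.1 hx with ⟨h1, _⟩ | ⟨h1, _⟩
      · exact ne_of_gt (lt_of_lt_of_le hc0 h1)
      · exact ne_of_gt (lt_of_lt_of_le (by positivity) h1)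
    calc (∫ u in c..(π/2), B u) ≤ ∫ u in c..(π/2), c * u⁻¹ := by
          apply intervalIntegral.integral_mono_on hcle (hBint c (π/2)) hint
          intro x hx
          have hx0 : 0 < x := lt_of_lt_of_le hc0 hx.1
          have : (B x) ≤ |2 / π * r * x|⁻¹ := min_le_right _ _
          refine this.trans ?_
          rw [abs_of_pos (by positivity)]
          rw [show (2 / π * r * x : ℝ) = (c * x⁻¹)⁻¹ by
            rw [hcdef]; field_simp [hx0.ne']]
          rw [inv_inv]
      _ = c * Real.log ((π/2) / c) := by
          rw [intervalIntegral.integral_const_mul,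
            integral_inv_of_pos hc0 (by positivity)]
      _ = c * Real.log r := by
          congr 1
          rw [hcdef]
          congr 1
          field_simp
  have h9 : (∫ u in (0:ℝ)..(π/2), B u) ≤ c * (1 + Real.log r) := by
    rw [← intervalIntegral.integral_add_adjacent_intervals (hBint 0 c) (hBint c (π/2))]
    have := add_le_add h7 h8
    linarith
  calc (∫ θ in (0:ℝ)..(2 * π), g θ) = 4 * ∫ θ in (0:ℝ)..(π/2), g θ := h4
    _ ≤ 4 * (c * (1 + Real.log r)) := by
        have := h5.trans (le_of_eq h6) |>.trans h9
        linarith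
    _ = 2 * π * (1 + Real.log r) / r := by
        rw [hcdef]; field_simp; ring

/-- For every pair of integers `(m₁, m₂) ≠ (0, 0)`,
`∫₀^{2π} min {1, 1/|m₁ cos θ + m₂ sin θ|} dθ
  ≤ 2π (1 + log √(m₁² + m₂²)) / √(m₁² + m₂²)`.
(The integrand differs from the paper's convention only on the finite --
hence null -- set of angles where `m₁ cos θ + m₂ sin θ = 0`, so the
integral is the same.) -/
theorem stmt0 (m₁ m₂ : ℤ) (hm : (m₁, m₂) ≠ (0, 0)) :
    (∫ θ in (0:ℝ)..(2 * π), min 1 |(m₁ : ℝ) * Real.cos θ + (m₂ : ℝ) * Real.sin θ|⁻¹) ≤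
      2 * π * (1 + Real.log (Real.sqrt ((m₁ : ℝ) ^ 2 + (m₂ : ℝ) ^ 2))) /
        Real.sqrt ((m₁ : ℝ) ^ 2 + (m₂ : ℝ) ^ 2) := by
  set r : ℝ := Real.sqrt ((m₁ : ℝ) ^ 2 + (m₂ : ℝ) ^ 2) with hrdef
  have hsum1 : (1:ℝ) ≤ (m₁ : ℝ) ^ 2 + (m₂ : ℝ) ^ 2 := by
    have hor : m₁ ≠ 0 ∨ m₂ ≠ 0 := by
      by_contra hc
      push_neg at hc
      exact hm (by rw [hc.1, hc.2])
    have : (1:ℤ) ≤ m₁ ^ 2 + m₂ ^ 2 := by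
      rcases hor with h | h
      · nlinarith [sq_nonneg m₂, Int.one_le_abs h, sq_abs m₁]
      · nlinarith [sq_nonneg m₁, Int.one_le_abs h, sq_abs m₂]
    exact_mod_cast this
  have hr1 : 1 ≤ r := by
    rw [hrdef, show (1:ℝ) = Real.sqrt 1 by simp]
    exact Real.sqrt_le_sqrt hsum1
  have hr0 : (0:ℝ) < r := lt_of_lt_of_le one_pos hr1
  set z : ℂ := ⟨(m₁ : ℝ), (m₂ : ℝ)⟩ with hzdef
  have habs : ‖z‖ = r := by
    rw [Complex.norm_def, Complex.normSq_mk, hrdef]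
    congr 1; ring
  have hz0 : z ≠ 0 := by
    intro h
    rw [h] at habs
    simp at habs
    linarith
  set φ : ℝ := Complex.arg z with hφdef
  have hcos : Real.cos φ = (m₁ : ℝ) / r := by
    rw [hφdef, Complex.cos_arg hz0, habs]
  have hsin : Real.sin φ = (m₂ : ℝ) / r := by
    rw [hφdef, Complex.sin_arg, habs]
  have hident : ∀ θ : ℝ, (m₁ : ℝ) * Real.cos θ + (m₂ : ℝ) * Real.sin θ
      = r * Real.cos (θ - φ) := by
    intro θ
    rw [Real.cos_sub, hcos, hsin]
    field_simp
  have hstep : (∫ θ in (0:ℝ)..(2 * π),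
      min 1 |(m₁ : ℝ) * Real.cos θ + (m₂ : ℝ) * Real.sin θ|⁻¹)
      = ∫ θ in (0:ℝ)..(2 * π), min 1 |r * Real.cos θ|⁻¹ := by
    have e1 : (∫ θ in (0:ℝ)..(2 * π),
        min 1 |(m₁ : ℝ) * Real.cos θ + (m₂ : ℝ) * Real.sin θ|⁻¹)
        = ∫ θ in (0:ℝ)..(2 * π), min 1 |r * Real.cos (θ - φ)|⁻¹ := by
      apply intervalIntegral.integral_congr
      intro x _; dsimp only; rw [hident x]
    rw [e1, intervalIntegral.integral_comp_sub_right
      (fun θ => min 1 |r * Real.cos θ|⁻¹) φ]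
    have hper : Function.Periodic (fun θ => min 1 |r * Real.cos θ|⁻¹) (2 * π) :=
      fun x => by simp [Real.cos_add_two_pi]
    have := hper.intervalIntegral_add_eq (-φ) 0
    rw [zero_add] at this
    rw [show (0:ℝ) - φ = -φ by ring, show 2 * π - φ = -φ + 2 * π by ring, this]
  rw [hstep]
  exact key r hr1
end

section
/- For every real number c ≥ 1, one has ∫₀^{π/2} min{1, 1/(c sin θ)} dθ ≤ (π/(2c)) (1 + log c). -/
open Real MeasureTheory intervalIntegral

/-- For every real `c ≥ 1`,
`∫₀^{π/2} min {1, 1/(c sin θ)} dθ ≤ (π/(2c)) (1 + log c)`.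
(The integrand differs from the paper's convention only at `θ = 0`, a null set.) -/
theorem stmt1 (c : ℝ) (hc : 1 ≤ c) :
    (∫ θ in (0:ℝ)..(π / 2), min 1 (c * Real.sin θ)⁻¹) ≤ π / (2 * c) * (1 + Real.log c) := by
  have hc0 : 0 < c := lt_of_lt_of_le one_pos hc
  have hπ : 0 < π := Real.pi_pos
  set a : ℝ := π / (2 * c) with ha
  have ha0 : 0 < a := by positivity
  have haπ : a ≤ π / 2 := by
    rw [ha, div_le_div_iff₀ (by positivity) (by positivity)]
    nlinarith
  set f : ℝ → ℝ := fun θ => min 1 (c * Real.sin θ)⁻¹ with hf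
  have hmeas : Measurable f :=
    measurable_const.min ((measurable_const.mul Real.measurable_sin).inv)
  -- integrability on subintervals of [0, π/2]
  have hint : ∀ u v : ℝ, 0 ≤ u → u ≤ π / 2 → 0 ≤ v → v ≤ π / 2 →
      IntervalIntegrable f volume u v := by
    intro u v hu hu' hv hv'
    apply IntervalIntegrable.mono_fun' (g := fun _ => (1 : ℝ)) intervalIntegrable_const
      hmeas.aestronglyMeasurable
    filter_upwards [MeasureTheory.ae_restrict_mem measurableSet_uIoc] with θ hθ
    obtain ⟨hl, hr⟩ := hθ
    have h1 : 0 ≤ θ := le_trans (le_min hu hv) hl.le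
    have h2 : θ ≤ π / 2 := le_trans hr (max_le hu' hv')
    have hs : 0 ≤ Real.sin θ := Real.sin_nonneg_of_nonneg_of_le_pi h1 (by linarith)
    have hfθ0 : 0 ≤ f θ := le_min zero_le_one (by positivity)
    rw [Real.norm_eq_abs, abs_of_nonneg hfθ0]
    exact min_le_left _ _
  have hint1 : IntervalIntegrable f volume 0 a := hint 0 a le_rfl (by positivity) ha0.le haπ
  have hint2 : IntervalIntegrable f volume a (π / 2) := hint a (π / 2) ha0.le haπ (by positivity) le_rfl
  -- split the integral
  have hsplit : (∫ θ in (0:ℝ)..(π / 2), f θ)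
      = (∫ θ in (0:ℝ)..a, f θ) + ∫ θ in a..(π / 2), f θ :=
    (integral_add_adjacent_intervals hint1 hint2).symm
  -- first piece: f ≤ 1
  have h1 : (∫ θ in (0:ℝ)..a, f θ) ≤ a := by
    calc (∫ θ in (0:ℝ)..a, f θ) ≤ ∫ _ in (0:ℝ)..a, (1:ℝ) := by
          apply integral_mono_on ha0.le hint1 intervalIntegrable_const
          intro θ _; exact min_le_left _ _
      _ = a := by simp
  -- second piece: f θ ≤ a * θ⁻¹ on [a, π/2]
  have hcont : IntervalIntegrable (fun θ : ℝ => a * θ⁻¹) volume a (π / 2) := by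
    apply ContinuousOn.intervalIntegrable
    apply ContinuousOn.mul continuousOn_const
    apply ContinuousOn.inv₀ continuousOn_id
    intro θ hθ
    rw [Set.uIcc_of_le haπ] at hθ
    exact ne_of_gt (lt_of_lt_of_le ha0 hθ.1)
  have h2 : (∫ θ in a..(π / 2), f θ) ≤ ∫ θ in a..(π / 2), a * θ⁻¹ := by
    apply integral_mono_on haπ hint2 hcont
    intro θ hθ
    have hθ0 : 0 < θ := lt_of_lt_of_le ha0 hθ.1
    have hsin : 2 / π * θ ≤ Real.sin θ := Real.mul_le_sin hθ0.le hθ.2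
    have key : θ / a ≤ c * Real.sin θ := by
      have : θ / a = c * (2 / π * θ) := by rw [ha]; field_simp
      rw [this]
      exact mul_le_mul_of_nonneg_left hsin hc0.le
    have hpos : 0 < θ / a := by positivity
    calc f θ ≤ (c * Real.sin θ)⁻¹ := min_le_right _ _
      _ ≤ (θ / a)⁻¹ := inv_anti₀ hpos key
      _ = a * θ⁻¹ := by field_simp
  -- compute the second integral
  have h3 : (∫ θ in a..(π / 2), a * θ⁻¹) = a * Real.log c := by
    rw [intervalIntegral.integral_const_mul, integral_inv_of_pos ha0 (by positivity)]
    congr 1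
    rw [ha]
    rw [show π / 2 / (π / (2 * c)) = c by field_simp]
  rw [show (∫ θ in (0:ℝ)..(π / 2), min 1 (c * Real.sin θ)⁻¹) = ∫ θ in (0:ℝ)..(π / 2), f θ from rfl,
    hsplit]
  have : a * (1 + Real.log c) = a + a * Real.log c := by ring
  rw [ha] at *
  linarith [h2.trans_eq h3]
end

section
/- Let U ⊆ ℝ² be an open neighborhood of the origin and let F : ℝ² → ℝ be C^∞ on U with F(0,0) = 0 and with vanishing gradient ∇F(0,0) = (0,0). Define f on the open set V := {(ρ,θ) ∈ ℝ² : ρ e(θ) ∈ U} by f(ρ,θ) := ρ^{−2} F(ρ e(θ)) for ρ ≠ 0 and f(0,θ) := ½ e(θ)·(HF(0,0) e(θ)), where HF(0,0) is the Hessian matrix of F at the origin. Then f is C^∞ on V; in particular f(0,θ) = ½ e(θ)·(HF(0,0) e(θ)) is the continuous extension of ρ^{−2} F(ρ e(θ)) to ρ = 0. -/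
open Real MeasureTheory intervalIntegral
set_option synthInstance.maxHeartbeats 1000000
set_option maxHeartbeats 1000000

lemma param_integral_contDiff (n : ℕ) :
    ∀ {E : Type} [NormedAddCommGroup E] [NormedSpace ℝ E] [CompleteSpace E]
      (G : (ℝ × ℝ) × ℝ → E), ContDiff ℝ (⊤ : ℕ∞) G →
      ContDiff ℝ (n : ℕ∞) (fun p : ℝ × ℝ => ∫ t in (0:ℝ)..1, G (p, t)) := by
  induction n with
  | zero =>
    intro E _ _ _ G hG
    rw [show (((0:ℕ):ℕ∞) : WithTop ℕ∞) = 0 by norm_cast, contDiff_zero]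
    exact continuous_parametric_intervalIntegral_of_continuous'
      (f := fun p t => G (p, t)) (μ := volume) hG.continuous 0 1
  | succ n ih =>
    intro E _ _ _ G hG
    set DG : (ℝ × ℝ) × ℝ → (ℝ × ℝ) →L[ℝ] E :=
      fun q => (fderiv ℝ G q).comp (ContinuousLinearMap.inl ℝ (ℝ × ℝ) ℝ) with hDG
    have hDGsmooth : ContDiff ℝ (⊤ : ℕ∞) DG :=
      (hG.fderiv_right (by simp)).clm_comp contDiff_const
    have key : ∀ p₀ : ℝ × ℝ,
        HasFDerivAt (fun p : ℝ × ℝ => ∫ t in (0:ℝ)..1, G (p, t))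
          (∫ t in (0:ℝ)..1, DG (p₀, t)) p₀ := by
      intro p₀
      obtain ⟨C, hC⟩ := (isCompact_closedBall p₀ 1 |>.prod isCompact_Icc).exists_bound_of_continuousOn
        (hDGsmooth.continuous.continuousOn (s := Metric.closedBall p₀ 1 ×ˢ Set.Icc (0:ℝ) 1))
      apply intervalIntegral.hasFDerivAt_integral_of_dominated_of_fderiv_le
        (F := fun x t => G (x, t)) (F' := fun x t => DG (x, t)) (bound := fun _ => C)
        (s := Metric.ball p₀ 1) (Metric.ball_mem_nhds p₀ one_pos)
      · exact Filter.Eventually.of_forall fun x =>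
          (hG.continuous.comp (Continuous.prodMk_right x)).aestronglyMeasurable
      · exact (hG.continuous.comp (Continuous.prodMk_right p₀)).intervalIntegrable 0 1
      · exact (hDGsmooth.continuous.comp (Continuous.prodMk_right p₀)).aestronglyMeasurable
      · refine Filter.Eventually.of_forall fun t ht x hx => hC (x, t) ?_
        rw [Set.uIoc_of_le (zero_le_one : (0:ℝ) ≤ 1)] at ht
        exact ⟨Metric.ball_subset_closedBall hx, Set.Ioc_subset_Icc_self ht⟩
      · exact intervalIntegrable_const
      · refine Filter.Eventually.of_forall fun t ht x hx => ?_
        have h1 : HasFDerivAt (fun x : ℝ × ℝ => (x, t)) (ContinuousLinearMap.inl ℝ (ℝ × ℝ) ℝ) x :=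
          (hasFDerivAt_prodMk_left x t)
        exact ((hG.differentiable (by simp) (x, t)).hasFDerivAt).comp x h1
    rw [show (((n + 1 : ℕ) : ℕ∞) : WithTop ℕ∞) = (((n:ℕ):ℕ∞) : WithTop ℕ∞) + 1 by push_cast; ring,
      contDiff_succ_iff_fderiv]
    refine ⟨fun p => (key p).differentiableAt, fun h => absurd h (by simp), ?_⟩
    have : (fderiv ℝ fun p : ℝ × ℝ => ∫ t in (0:ℝ)..1, G (p, t)) =
        fun p₀ => ∫ t in (0:ℝ)..1, DG (p₀, t) := funext fun p₀ => (key p₀).fderiv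
    rw [this]
    exact ih DG hDGsmooth

/-- Let `U ⊆ ℝ²` be an open neighbourhood of the origin and
`F : ℝ² → ℝ` be `C^∞` on `U` with `F(0,0) = 0` and vanishing gradient at the origin.
Then the function `f(ρ,θ) = ρ⁻² F(ρ e(θ))` (for `ρ ≠ 0`), extended at `ρ = 0` by
`f(0,θ) = ½ e(θ)·(HF(0,0) e(θ))` where `HF(0,0)` is the Hessian of `F` at the origin,
is `C^∞` on `V = {(ρ,θ) : ρ e(θ) ∈ U}`; here `e(θ) = (cos θ, sin θ)`. -/
theorem stmt2 (U : Set (ℝ × ℝ)) (hU : IsOpen U) (hU0 : ((0, 0) : ℝ × ℝ) ∈ U)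
    (F : ℝ × ℝ → ℝ) (hF : ContDiffOn ℝ (⊤ : ℕ∞) F U)
    (hF0 : F (0, 0) = 0) (hdF0 : fderiv ℝ F (0, 0) = 0) :
    ContDiffOn ℝ (⊤ : ℕ∞)
      (fun p : ℝ × ℝ =>
        if p.1 = 0 then
          (1 / 2) *
            fderiv ℝ (fderiv ℝ F) (0, 0) ((Real.cos p.2, Real.sin p.2) : ℝ × ℝ)
              ((Real.cos p.2, Real.sin p.2) : ℝ × ℝ)
        else (p.1 ^ 2)⁻¹ * F (p.1 • ((Real.cos p.2, Real.sin p.2) : ℝ × ℝ)))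
      {p : ℝ × ℝ | p.1 • ((Real.cos p.2, Real.sin p.2) : ℝ × ℝ) ∈ U} := by
  have h00 : ((0, 0) : ℝ × ℝ) = (0 : ℝ × ℝ) := rfl
  rw [h00] at hU0 hF0 hdF0
  set e : ℝ → ℝ × ℝ := fun θ => ((Real.cos θ, Real.sin θ) : ℝ × ℝ) with he_def
  have he : ContDiff ℝ (⊤ : ℕ∞) e := ContDiff.prodMk Real.contDiff_cos Real.contDiff_sin
  have hee : ∀ θ, ‖e θ‖ ≤ 1 := by
    intro θ
    rw [he_def, Prod.norm_def]
    simp only [Real.norm_eq_abs]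
    exact max_le (abs_cos_le_one θ) (abs_sin_le_one θ)
  obtain ⟨r, hr, hball⟩ : ∃ r > 0, Metric.ball (0 : ℝ × ℝ) r ⊆ U :=
    Metric.isOpen_iff.mp hU _ hU0
  set ε : ℝ := r / 4 with hε_def
  have hε : 0 < ε := by rw [hε_def]; positivity
  have hεr : 3 * ε < r := by rw [hε_def]; linarith
  set χ : ContDiffBump (0 : ℝ × ℝ) :=
    ⟨2 * ε, 3 * ε, by positivity, by linarith⟩ with hχ_def
  have hχsupp : Metric.closedBall (0 : ℝ × ℝ) (3 * ε) ⊆ Metric.ball (0 : ℝ × ℝ) r := by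
    intro y hy
    rw [Metric.mem_closedBall] at hy
    rw [Metric.mem_ball]
    linarith
  set H : ℝ × ℝ → (ℝ × ℝ) →L[ℝ] (ℝ × ℝ) →L[ℝ] ℝ := fderiv ℝ (fderiv ℝ F) with hH_def
  have hdF : ContDiffOn ℝ (⊤ : ℕ∞) (fderiv ℝ F) U := hF.fderiv_of_isOpen hU (by simp)
  have hH : ContDiffOn ℝ (⊤ : ℕ∞) H U := hdF.fderiv_of_isOpen hU (by simp)
  set B : ℝ × ℝ → (ℝ × ℝ) →L[ℝ] (ℝ × ℝ) →L[ℝ] ℝ := fun x => χ x • H x with hB_def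
  have hBH : ∀ x ∈ Metric.closedBall (0 : ℝ × ℝ) (2 * ε), B x = H x := by
    intro x hx
    rw [hB_def]
    simp only
    rw [χ.one_of_mem_closedBall hx, one_smul]
  have hB : ContDiff ℝ (⊤ : ℕ∞) B := by
    rw [contDiff_iff_contDiffAt]
    intro x
    by_cases hx : x ∈ Metric.ball (0 : ℝ × ℝ) r
    · haveI : IsBoundedSMul ℝ ((ℝ × ℝ) →L[ℝ] (ℝ × ℝ) →L[ℝ] ℝ) :=
        NormedSpace.toIsBoundedSMul (𝕜 := ℝ) (E := ((ℝ × ℝ) →L[ℝ] (ℝ × ℝ) →L[ℝ] ℝ))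
      exact (χ.contDiff.contDiffAt).smul (hH.contDiffAt (hU.mem_nhds (hball hx)))
    · have hx' : x ∉ tsupport (χ : ℝ × ℝ → ℝ) := by
        rw [χ.tsupport_eq]
        intro hmem
        exact hx (hχsupp hmem)
      have hev : ∀ᶠ y in nhds x, B y = 0 := by
        filter_upwards [(isClosed_tsupport (χ : ℝ × ℝ → ℝ)).isOpen_compl.mem_nhds hx'] with y hy
        rw [hB_def]
        simp only
        rw [image_eq_zero_of_notMem_tsupport hy]
        exact ContinuousLinearMap.ext fun v => ContinuousLinearMap.ext fun w => by
          simp [ContinuousLinearMap.smul_apply]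
      exact (contDiffAt_const
        (c := (0 : (ℝ × ℝ) →L[ℝ] (ℝ × ℝ) →L[ℝ] ℝ))).congr_of_eventuallyEq hev
  set G : (ℝ × ℝ) × ℝ → ℝ :=
    fun q => (1 - q.2) * ((B (q.2 • (q.1.1 • e q.1.2))) (e q.1.2)) (e q.1.2) with hG_def
  have hG : ContDiff ℝ (⊤ : ℕ∞) G := by
    have h1 : ContDiff ℝ (⊤ : ℕ∞) (fun q : (ℝ × ℝ) × ℝ => q.2 • (q.1.1 • e q.1.2)) :=
      contDiff_snd.smul (contDiff_fst.fst.smul (he.comp contDiff_fst.snd))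
    have h3 : ContDiff ℝ (⊤ : ℕ∞) (fun q : (ℝ × ℝ) × ℝ => e q.1.2) := he.comp contDiff_fst.snd
    exact (contDiff_const.sub contDiff_snd).mul (((hB.comp h1).clm_apply h3).clm_apply h3)
  set g : ℝ × ℝ → ℝ := fun p => ∫ t in (0:ℝ)..1, G (p, t) with hg_def
  have hg : ContDiff ℝ (⊤ : ℕ∞) g := by
    rw [show ((⊤ : ℕ∞) : WithTop ℕ∞) = (⊤ : ℕ∞) from rfl]
    rw [contDiff_infty]
    exact fun n => param_integral_contDiff n G hG
  have hfg : ∀ p : ℝ × ℝ, |p.1| < 2 * ε →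
      (if p.1 = 0 then
          (1 / 2) * fderiv ℝ (fderiv ℝ F) (0, 0) (e p.2) (e p.2)
        else (p.1 ^ 2)⁻¹ * F (p.1 • e p.2)) = g p := by
    intro p hp
    have hxball : ∀ t : ℝ, t ∈ Set.uIcc (0:ℝ) 1 →
        t • (p.1 • e p.2) ∈ Metric.closedBall (0 : ℝ × ℝ) (2 * ε) := by
      intro t ht
      rw [Set.uIcc_of_le (zero_le_one : (0:ℝ) ≤ 1)] at ht
      simp only [Metric.mem_closedBall, dist_zero_right]
      calc ‖t • (p.1 • e p.2)‖ = |t| * ‖p.1 • e p.2‖ := by rw [norm_smul, Real.norm_eq_abs]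
        _ ≤ 1 * ‖p.1 • e p.2‖ := by
            apply mul_le_mul_of_nonneg_right _ (norm_nonneg _)
            rw [abs_le]; exact ⟨by linarith [ht.1], ht.2⟩
        _ = ‖p.1 • e p.2‖ := one_mul _
        _ ≤ |p.1| * 1 := by
            rw [norm_smul, Real.norm_eq_abs]
            exact mul_le_mul_of_nonneg_left (hee p.2) (abs_nonneg _)
        _ ≤ 2 * ε := by linarith
    have hxU : ∀ t : ℝ, t ∈ Set.uIcc (0:ℝ) 1 → t • (p.1 • e p.2) ∈ U := by
      intro t ht
      apply hball
      have h1 := Metric.mem_closedBall.mp (hxball t ht)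
      rw [Metric.mem_ball]
      linarith
    by_cases hp0 : p.1 = 0
    · rw [if_pos hp0]
      have hgp : g p = ∫ t in (0:ℝ)..1, (1 - t) * (((H 0) (e p.2)) (e p.2)) := by
        rw [hg_def]
        simp only
        apply intervalIntegral.integral_congr
        intro t ht
        rw [hG_def]
        simp only
        rw [hp0, zero_smul, smul_zero,
          hBH 0 (by rw [Metric.mem_closedBall, dist_self]; positivity)]
      rw [hgp, intervalIntegral.integral_mul_const]
      have hhalf : (∫ t in (0:ℝ)..1, (1 - t)) = 1 / 2 := by
        rw [intervalIntegral.integral_sub intervalIntegrable_const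
          (continuous_id'.intervalIntegrable 0 1), integral_id]
        simp
        norm_num
      rw [hhalf, hH_def, h00]
    · rw [if_neg hp0]
      set x : ℝ × ℝ := p.1 • e p.2 with hx_def
      set φ' : ℝ → ℝ := fun t => (fderiv ℝ F (t • x)) x with hφ'_def
      set ψ : ℝ → ℝ := fun t => (1 - t) * φ' t + F (t • x) with hψ_def
      set ψd : ℝ → ℝ := fun t => (1 - t) * (((H (t • x)) x) x) with hψd_def
      have hderiv : ∀ t ∈ Set.uIcc (0:ℝ) 1, HasDerivAt ψ (ψd t) t := by
        intro t ht
        have hU' : t • x ∈ U := hxU t ht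
        have hx1 : HasDerivAt (fun s : ℝ => s • x) x t := by
          simpa using (hasDerivAt_id t).smul_const x
        have hFd : HasFDerivAt F (fderiv ℝ F (t • x)) (t • x) :=
          ((hF.contDiffAt (hU.mem_nhds hU')).differentiableAt (by simp)).hasFDerivAt
        have h1 : HasDerivAt (fun s : ℝ => F (s • x)) (φ' t) t := hFd.comp_hasDerivAt t hx1
        have hHd : HasFDerivAt (fderiv ℝ F) (H (t • x)) (t • x) :=
          ((hdF.contDiffAt (hU.mem_nhds hU')).differentiableAt (by simp)).hasFDerivAt
        have h2' : HasDerivAt (fun s : ℝ => fderiv ℝ F (s • x)) ((H (t • x)) x) t :=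
          hHd.comp_hasDerivAt t hx1
        have h2 : HasDerivAt φ' (((H (t • x)) x) x) t := by
          have h2'' := (ContinuousLinearMap.apply ℝ ℝ x).hasFDerivAt.comp_hasDerivAt t h2'
          exact h2''
        have hsub : HasDerivAt (fun s : ℝ => (1 - s)) (-1 : ℝ) t := by
          simpa using (hasDerivAt_id t).const_sub (1:ℝ)
        have hcomb := (hsub.mul h2).add h1
        convert hcomb using 1
        case e'_4 => rfl
        case e'_5 => rfl
        case e'_8 => rfl
        rw [hψd_def, hφ'_def]
        simp only
        ring
      have hψdint : IntervalIntegrable ψd volume 0 1 := by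
        apply ContinuousOn.intervalIntegrable
        have hcongr : ∀ t ∈ Set.uIcc (0:ℝ) 1,
            (1 - t) * (((B (t • x)) x) x) = ψd t := by
          intro t ht
          rw [hψd_def]
          simp only
          rw [hBH _ (hxball t ht)]
        apply ContinuousOn.congr _ (fun t ht => (hcongr t ht).symm)
        apply Continuous.continuousOn
        have hBc : Continuous fun t : ℝ => B (t • x) :=
          hB.continuous.comp (continuous_id.smul continuous_const)
        exact (continuous_const.sub continuous_id).mul
          ((ContinuousLinearMap.apply ℝ ℝ x).continuous.comp
            ((ContinuousLinearMap.apply ℝ ((ℝ × ℝ) →L[ℝ] ℝ) x).continuous.comp hBc))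
      have hFTC : ∫ t in (0:ℝ)..1, ψd t = ψ 1 - ψ 0 :=
        intervalIntegral.integral_eq_sub_of_hasDerivAt hderiv hψdint
      have hψ1 : ψ 1 = F x := by
        rw [hψ_def]; simp
      have hψ0 : ψ 0 = 0 := by
        rw [hψ_def, hφ'_def]
        simp only [zero_smul, sub_zero, one_mul]
        rw [hdF0, hF0]
        simp
      have hint : ∫ t in (0:ℝ)..1, ψd t = p.1 ^ 2 * g p := by
        have hcongr : ∀ t ∈ Set.uIcc (0:ℝ) 1, ψd t = p.1 ^ 2 * G (p, t) := by
          intro t ht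
          have hb := hBH _ (hxball t ht)
          have hL : ψd t = (1 - t) * ((H (t • x)) x) x := rfl
          have hR : G (p, t) = (1 - t) * ((B (t • (p.1 • e p.2))) (e p.2)) (e p.2) := rfl
          rw [hL, hR, hb, hx_def]
          simp only [ContinuousLinearMap.map_smul, ContinuousLinearMap.smul_apply,
            smul_eq_mul]
          ring
        rw [intervalIntegral.integral_congr hcongr, intervalIntegral.integral_const_mul]
      have hF_eq : F x = p.1 ^ 2 * g p := by rw [← hint, hFTC, hψ1, hψ0, sub_zero]
      rw [hF_eq]
      field_simp
  intro p hp
  by_cases hp0 : p.1 = 0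
  · apply ContDiffAt.contDiffWithinAt
    apply hg.contDiffAt.congr_of_eventuallyEq
    have hopen : IsOpen {q : ℝ × ℝ | |q.1| < 2 * ε} :=
      isOpen_lt (continuous_abs.comp continuous_fst) continuous_const
    have hpmem : p ∈ {q : ℝ × ℝ | |q.1| < 2 * ε} := by
      simp only [Set.mem_setOf_eq, hp0, abs_zero]
      positivity
    filter_upwards [hopen.mem_nhds hpmem] with q hq
    exact hfg q hq
  · apply ContDiffAt.contDiffWithinAt
    have hsm : ContDiffAt ℝ (⊤ : ℕ∞)
        (fun q : ℝ × ℝ => (q.1 ^ 2)⁻¹ * F (q.1 • e q.2)) p := by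
      have hinner : ContDiff ℝ (⊤ : ℕ∞) (fun q : ℝ × ℝ => q.1 • e q.2) :=
        contDiff_fst.smul (he.comp contDiff_snd)
      have hFc : ContDiffAt ℝ (⊤ : ℕ∞) F (p.1 • e p.2) := hF.contDiffAt (hU.mem_nhds hp)
      exact (((contDiff_fst.pow 2).contDiffAt.inv (pow_ne_zero 2 hp0))).mul
        (hFc.comp p hinner.contDiffAt)
    apply hsm.congr_of_eventuallyEq
    have hopen : IsOpen {q : ℝ × ℝ | q.1 ≠ 0} :=
      isOpen_compl_iff.mpr (isClosed_eq continuous_fst continuous_const)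
    filter_upwards [hopen.mem_nhds hp0] with q hq
    rw [if_neg hq]
end

section
/- Let r ≥ 2 be an integer and c₀ > 0, C_r ≥ 0. Then there exists a constant C > 0, depending only on r, c₀ and C_r, with the following property. Let N be a positive integer, h = 1/N, and let δ > 0 satisfy c₀ δ < 1/2. Let χ : ℝ² → ℂ be such that for each θ the function ρ ↦ χ(ρ,θ) is C^r, vanishes for |ρ| ≥ c₀ δ, and satisfies |∂_ρ^r χ(ρ,θ)| ≤ C_r δ^{−r} for all (ρ,θ). Then for all θ ∈ [0,2π], all γ ∈ ℝ and all (m₁,m₂) ∈ ℤ² with |m₁| + |m₂| ≤ N − 1, the radial quadrature error E := | ∫_ℝ χ(ρ,θ) exp(2πi ρ (m₁ cos θ + m₂ sin θ)) dρ − c(θ) h Σ_{q∈ℤ} χ(γ + q c(θ) h, θ) exp(2πi (γ + q c(θ) h)(m₁ cos θ + m₂ sin θ)) | satisfies: E ≤ C δ^{1−r} (N − |m₁ cot θ| − |m₂|)^{−r} if |tan θ| ≥ |cot θ|, and E ≤ C δ^{1−r} (N − |m₁| − |m₂ tan θ|)^{−r} otherwise. -/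
open Real

/-- The angle-dependent weight `c(θ) = min {1/|cos θ|, 1/|sin θ|}`, written as
`(max |cos θ| |sin θ|)⁻¹` (an identical value, avoiding division by zero). -/
noncomputable def cwt (θ : ℝ) : ℝ := (max |Real.cos θ| |Real.sin θ|)⁻¹

/-- The radial quadrature error
`E = |∫_ℝ χ(ρ,θ) e^{2πiρ(m₁cos θ+m₂sin θ)} dρ
      − c(θ)h Σ_{q∈ℤ} χ(γ+qc(θ)h,θ) e^{2πi(γ+qc(θ)h)(m₁cos θ+m₂sin θ)}|`. -/
noncomputable def radErr (χ : ℝ → ℝ → ℂ) (h θ γ : ℝ) (m₁ m₂ : ℤ) : ℝ :=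
  Norm.norm
    ((∫ ρ : ℝ, χ ρ θ *
        Complex.exp (2 * (π : ℂ) * Complex.I * ρ *
          ((m₁ : ℂ) * (Real.cos θ : ℂ) + (m₂ : ℂ) * (Real.sin θ : ℂ)))) -
      (cwt θ : ℂ) * (h : ℂ) * ∑' q : ℤ,
        χ (γ + q * (cwt θ * h)) θ *
          Complex.exp (2 * (π : ℂ) * Complex.I * ((γ + q * (cwt θ * h) : ℝ) : ℂ) *
            ((m₁ : ℂ) * (Real.cos θ : ℂ) + (m₂ : ℂ) * (Real.sin θ : ℂ))))


open MeasureTheory FourierTransform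

set_option maxHeartbeats 1000000


lemma aux_tsupport {r : ℕ} {φ : ℝ → ℂ} {a : ℝ}
    (hsupp : ∀ ρ : ℝ, a ≤ |ρ| → φ ρ = 0) :
    ∀ n : ℕ, tsupport (iteratedDeriv n φ) ⊆ Set.Icc (-a) a := by
  have h0 : tsupport φ ⊆ Set.Icc (-a) a := by
    apply closure_minimal _ isClosed_Icc
    intro x hx
    rw [Function.mem_support] at hx
    have : |x| < a := by by_contra h; exact hx (hsupp x (not_lt.1 h))
    have := abs_lt.1 this
    exact ⟨this.1.le, this.2.le⟩
  intro n
  induction n with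
  | zero => simpa [iteratedDeriv_zero] using h0
  | succ n ih =>
      rw [iteratedDeriv_succ]
      exact closure_minimal (support_deriv_subset.trans ih) isClosed_Icc

lemma fourier_decay {r : ℕ} {φ : ℝ → ℂ} (hφ : ContDiff ℝ (r : ℕ∞) φ)
    {a B : ℝ} (ha : 0 < a)
    (hsupp : ∀ ρ : ℝ, a ≤ |ρ| → φ ρ = 0)
    (hbound : ∀ ρ, ‖iteratedDeriv r φ ρ‖ ≤ B) (η : ℝ) :
    ‖𝓕 φ η‖ * (2 * π * |η|) ^ r ≤ 2 * a * B := by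
  have hts := aux_tsupport (r := r) hsupp
  have hcs : ∀ n : ℕ, HasCompactSupport (iteratedDeriv n φ) := fun n =>
    HasCompactSupport.of_support_subset_isCompact isCompact_Icc
      ((subset_tsupport _).trans (hts n))
  have hint : ∀ n : ℕ, (n : ℕ∞) ≤ (r : ℕ∞) → Integrable (iteratedDeriv n φ) := by
    intro n hn
    exact (hφ.continuous_iteratedDeriv n (by exact_mod_cast hn)).integrable_of_hasCompactSupport
      (hcs n)
  have key := Real.fourier_iteratedDeriv (N := (r : ℕ∞)) hφ hint le_rfl
  have key' := congrFun key η
  have hnorm1 : ‖𝓕 (iteratedDeriv r φ) η‖ = (2 * π * |η|) ^ r * ‖𝓕 φ η‖ := by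
    rw [key']
    rw [norm_smul, norm_pow]
    congr 2
    simp [norm_mul, Complex.norm_real, abs_of_pos pi_pos]
  have hnorm2 : ‖𝓕 (iteratedDeriv r φ) η‖ ≤ 2 * a * B := by
    refine (VectorFourier.norm_fourierIntegral_le_integral_norm _ _ _ _ _).trans ?_
    have hψ := hint r le_rfl
    have hB : 0 ≤ B := le_trans (norm_nonneg _) (hbound 0)
    have hmono : ∀ x : ℝ, ‖iteratedDeriv r φ x‖ ≤
        Set.indicator (Set.Icc (-a) a) (fun _ => B) x := by
      intro x
      by_cases hx : x ∈ Set.Icc (-a) a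
      · rw [Set.indicator_of_mem hx]; exact hbound x
      · rw [Set.indicator_of_notMem hx]
        have : iteratedDeriv r φ x = 0 :=
          image_eq_zero_of_notMem_tsupport (fun h => hx (hts r h))
        simp [this]
    calc ∫ x, ‖iteratedDeriv r φ x‖ ≤ ∫ x, Set.indicator (Set.Icc (-a) a) (fun _ => B) x := by
          refine integral_mono hψ.norm ?_ hmono
          rw [integrable_indicator_iff measurableSet_Icc]
          exact integrableOn_const measure_Icc_lt_top.ne
      _ = 2 * a * B := by
          rw [integral_indicator_const _ measurableSet_Icc, measureReal_def, Real.volume_Icc, smul_eq_mul,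
            ENNReal.toReal_ofReal (by linarith : (0:ℝ) ≤ a - -a)]
          ring
  calc ‖𝓕 φ η‖ * (2 * π * |η|) ^ r = ‖𝓕 (iteratedDeriv r φ) η‖ := by rw [hnorm1]; ring
    _ ≤ 2 * a * B := hnorm2


lemma fourier_comp_affine {φ : ℝ → ℂ} {H : ℝ} (hH : 0 < H) (γ μ ξ : ℝ) :
    𝓕 (fun x : ℝ => φ (γ + H * x) *
        Complex.exp (2 * π * Complex.I * ((γ + H * x : ℝ) : ℂ) * (μ : ℂ))) ξ
      = (H⁻¹ : ℂ) * Complex.exp (2 * π * Complex.I * ξ * γ / H) * 𝓕 φ (ξ / H - μ) := by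
  have hHne : H ≠ 0 := ne_of_gt hH
  set Φ : ℝ → ℂ := fun u =>
    Complex.exp (-(2 * π * Complex.I * ξ * ((u : ℂ) - γ) / H)) *
      (φ u * Complex.exp (2 * π * Complex.I * u * μ)) with hΦ
  have step1 : (fun x : ℝ => Complex.exp (↑(-2 * π * x * ξ) * Complex.I) •
      (φ (γ + H * x) * Complex.exp (2 * π * Complex.I * ((γ + H * x : ℝ) : ℂ) * (μ : ℂ))))
      = fun x : ℝ => Φ (γ + H * x) := by
    funext x
    rw [smul_eq_mul, hΦ]
    congr 2
    have hHc : (H : ℂ) ≠ 0 := Complex.ofReal_ne_zero.mpr hHne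
    push_cast
    field_simp
    ring
  have key : ∀ u : ℝ, Φ u = Complex.exp (2 * π * Complex.I * ξ * γ / H) *
      (Complex.exp (↑(-2 * π * u * (ξ / H - μ)) * Complex.I) * φ u) := by
    intro u
    have h1 : (-(2 * π * Complex.I * ξ * ((u : ℂ) - γ) / H)) + 2 * π * Complex.I * u * μ
        = 2 * π * Complex.I * ξ * γ / H + (↑(-2 * π * u * (ξ / H - μ)) * Complex.I) := by
      push_cast
      field_simp
      ring
    calc Φ u = Complex.exp ((-(2 * π * Complex.I * ξ * ((u : ℂ) - γ) / H))
          + 2 * π * Complex.I * u * μ) * φ u := by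
          rw [Complex.exp_add, hΦ]; ring
      _ = _ := by rw [h1, Complex.exp_add]; ring
  have step3 : ∫ u : ℝ, Φ u
      = Complex.exp (2 * π * Complex.I * ξ * γ / H) * 𝓕 φ (ξ / H - μ) := by
    simp_rw [key]
    rw [integral_const_mul, Real.fourier_real_eq_integral_exp_smul]
    simp_rw [smul_eq_mul]
  rw [Real.fourier_real_eq_integral_exp_smul, step1]
  have step2 : (∫ x : ℝ, Φ (γ + H * x)) = |H⁻¹| • ∫ u : ℝ, Φ u := by
    rw [MeasureTheory.Measure.integral_comp_mul_left (fun y => Φ (γ + y)) H,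
      MeasureTheory.integral_add_left_eq_self]
  rw [step2, step3, abs_of_pos (inv_pos.2 hH), Complex.real_smul]
  push_cast
  ring

lemma poisson_bound {r : ℕ} (hr : 2 ≤ r) {φ : ℝ → ℂ} (hφ : ContDiff ℝ (r : ℕ∞) φ)
    {a B : ℝ} (ha : 0 < a) (hsupp : ∀ ρ : ℝ, a ≤ |ρ| → φ ρ = 0)
    (hbound : ∀ ρ, ‖iteratedDeriv r φ ρ‖ ≤ B)
    {H : ℝ} (hH : 0 < H) (γ μ : ℝ) {D : ℝ} (hD : 0 < D)
    (hgeom : ∀ k : ℤ, k ≠ 0 → D * |(k : ℝ)| ≤ 2 * π * |(k : ℝ) / H - μ|) :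
    ‖(∫ ρ : ℝ, φ ρ * Complex.exp (2 * π * Complex.I * ρ * (μ : ℂ))) -
        (H : ℂ) * ∑' q : ℤ, φ (γ + q * H) *
          Complex.exp (2 * π * Complex.I * ((γ + q * H : ℝ) : ℂ) * (μ : ℂ))‖
      ≤ (∑' k : ℤ, 1 / (k : ℝ) ^ 2) * (2 * a * B) / D ^ r := by
  have hHne : H ≠ 0 := ne_of_gt hH
  have hB : 0 ≤ B := le_trans (norm_nonneg _) (hbound 0)
  set g : ℝ → ℂ := fun x => φ (γ + H * x) *
      Complex.exp (2 * π * Complex.I * ((γ + H * x : ℝ) : ℂ) * (μ : ℂ)) with hg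
  have hFg : ∀ ξ : ℝ, 𝓕 g ξ = (H⁻¹ : ℂ) *
      Complex.exp (2 * π * Complex.I * ξ * γ / H) * 𝓕 φ (ξ / H - μ) :=
    fun ξ => fourier_comp_affine hH γ μ ξ
  have hFgnorm : ∀ ξ : ℝ, ‖𝓕 g ξ‖ = H⁻¹ * ‖𝓕 φ (ξ / H - μ)‖ := by
    intro ξ
    rw [hFg ξ]
    have h1 : (2 * π * Complex.I * (ξ : ℂ) * γ / (H : ℂ))
        = ((2 * π * ξ * γ / H : ℝ) : ℂ) * Complex.I := by push_cast; ring
    rw [norm_mul, norm_mul, h1]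
    have h2 : ‖Complex.exp (((2 * π * ξ * γ / H : ℝ) : ℂ) * Complex.I)‖ = 1 :=
      Complex.norm_exp_ofReal_mul_I _
    rw [h2]
    rw [norm_inv, Complex.norm_real, Real.norm_eq_abs, abs_of_pos hH]
    ring
  have hknorm : ∀ k : ℤ, k ≠ 0 →
      ‖𝓕 g (k : ℝ)‖ ≤ H⁻¹ * (2 * a * B / D ^ r) * (1 / (k : ℝ) ^ 2) := by
    intro k hk
    set η : ℝ := (k : ℝ) / H - μ with hη
    have hdec := fourier_decay hφ ha hsupp hbound η
    have hkabs : (1 : ℝ) ≤ |(k : ℝ)| := by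
      rw [← Int.cast_abs]
      exact_mod_cast Int.one_le_abs hk
    have hk2 : ((k : ℝ)) ^ 2 ≤ |(k : ℝ)| ^ r := by
      calc ((k : ℝ)) ^ 2 = |(k : ℝ)| ^ 2 := by rw [sq_abs]
        _ ≤ |(k : ℝ)| ^ r := pow_le_pow_right₀ hkabs hr
    have hgeo := hgeom k hk
    have hpow : D ^ r * (k : ℝ) ^ 2 ≤ (2 * π * |η|) ^ r := by
      calc D ^ r * (k : ℝ) ^ 2 ≤ D ^ r * |(k : ℝ)| ^ r :=
            mul_le_mul_of_nonneg_left hk2 (by positivity)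
        _ = (D * |(k : ℝ)|) ^ r := by rw [mul_pow]
        _ ≤ (2 * π * |η|) ^ r :=
            pow_le_pow_left₀ (by positivity) hgeo r
    have hk2pos : (0 : ℝ) < (k : ℝ) ^ 2 := by
      have : (k : ℝ) ≠ 0 := Int.cast_ne_zero.mpr hk
      positivity
    have hφη : ‖𝓕 φ η‖ ≤ 2 * a * B / (D ^ r * (k : ℝ) ^ 2) := by
      rw [le_div_iff₀ (by positivity)]
      calc ‖𝓕 φ η‖ * (D ^ r * (k : ℝ) ^ 2) ≤ ‖𝓕 φ η‖ * (2 * π * |η|) ^ r :=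
            mul_le_mul_of_nonneg_left hpow (norm_nonneg _)
        _ ≤ 2 * a * B := hdec
    rw [hFgnorm]
    calc H⁻¹ * ‖𝓕 φ η‖ ≤ H⁻¹ * (2 * a * B / (D ^ r * (k : ℝ) ^ 2)) :=
          mul_le_mul_of_nonneg_left hφη (by positivity)
      _ = H⁻¹ * (2 * a * B / D ^ r) * (1 / (k : ℝ) ^ 2) := by
          ring
  have hsum2 : Summable (fun k : ℤ => 1 / (k : ℝ) ^ 2) :=
    summable_one_div_int_pow.2 one_lt_two
  have hgsummable : Summable (fun k : ℤ => 𝓕 g (k : ℝ)) := by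
    apply Summable.of_norm_bounded_eventually
      (g := fun k : ℤ => H⁻¹ * (2 * a * B / D ^ r) * (1 / (k : ℝ) ^ 2)) (hsum2.mul_left _)
    rw [Filter.eventually_cofinite]
    apply Set.Finite.subset (Set.finite_singleton (0 : ℤ))
    intro k hk
    simp only [Set.mem_setOf_eq, not_le] at hk
    by_contra hk0
    simp only [Set.mem_singleton_iff] at hk0
    exact absurd (hknorm k hk0) (not_le.2 hk)
  have hgcont : Continuous g := by
    apply Continuous.mul
    · exact hφ.continuous.comp (by continuity)
    · exact Complex.continuous_exp.comp (by continuity)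
  have hgO : g =O[Filter.cocompact ℝ] fun x : ℝ => |x| ^ (-(2:ℝ)) := by
    have hg0 : ∀ᶠ x in Filter.cocompact ℝ, g x = 0 := by
      have hK : (Set.Icc ((-a - γ) / H) ((a - γ) / H))ᶜ ∈ Filter.cocompact ℝ :=
        isCompact_Icc.compl_mem_cocompact
      filter_upwards [hK] with x hx
      rw [Set.mem_compl_iff, Set.mem_Icc, not_and_or] at hx
      have : a ≤ |γ + H * x| := by
        rcases hx with hx | hx
        · rw [not_le, lt_div_iff₀ hH] at hx
          rw [le_abs]
          right; nlinarith
        · rw [not_le, div_lt_iff₀ hH] at hx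
          rw [le_abs]
          left; nlinarith
      simp [hg, hsupp _ this]
    apply Asymptotics.IsBigO.of_bound 1
    filter_upwards [hg0] with x hx
    rw [hx, norm_zero, one_mul]
    positivity
  have hpoisson := Real.tsum_eq_tsum_fourier_of_rpow_decay_of_summable hgcont
    one_lt_two hgO hgsummable 0
  simp only [zero_add] at hpoisson
  have hfourier0 : ∀ n : ℤ, (fourier n ((0 : ℝ) : UnitAddCircle)) = 1 := fun n => by
    simpa using fourier_eval_zero (T := 1) n
  simp only [hfourier0, mul_one] at hpoisson
  -- identify the two sides
  have hint_eq : (∫ ρ : ℝ, φ ρ * Complex.exp (2 * π * Complex.I * ρ * (μ : ℂ)))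
      = 𝓕 φ (-μ) := by
    rw [Real.fourier_real_eq_integral_exp_smul]
    congr 1
    funext v
    rw [smul_eq_mul]
    rw [mul_comm]
    congr 2
    push_cast
    ring
  have hF0 : 𝓕 φ (-μ) = (H : ℂ) * 𝓕 g 0 := by
    rw [hFg 0]
    simp only [Complex.ofReal_zero, mul_zero, zero_mul, zero_div, Complex.exp_zero, mul_one,
      Complex.ofReal_inv, zero_sub]
    rw [← mul_assoc, mul_inv_cancel₀ (Complex.ofReal_ne_zero.mpr hHne), one_mul]
  have hsum_eq : (∑' q : ℤ, φ (γ + q * H) *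
      Complex.exp (2 * π * Complex.I * ((γ + q * H : ℝ) : ℂ) * (μ : ℂ)))
      = ∑' k : ℤ, 𝓕 g (k : ℝ) := by
    rw [← hpoisson]
    apply tsum_congr
    intro q
    simp only [hg, mul_comm (q : ℝ) H]
  rw [hint_eq, hF0, hsum_eq]
  rw [← mul_sub]
  rw [norm_mul, Complex.norm_real, Real.norm_eq_abs, abs_of_pos hH]
  have hsplit := Summable.tsum_eq_add_tsum_ite hgsummable 0
  have hite : ∀ k : ℤ, ‖(if k = 0 then 0 else 𝓕 g (k : ℝ))‖ ≤
      H⁻¹ * (2 * a * B / D ^ r) * (1 / (k : ℝ) ^ 2) := by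
    intro k
    by_cases hk : k = 0
    · simp [hk]
    · rw [if_neg hk]; exact hknorm k hk
  have hsummable_ite : Summable (fun k : ℤ => ‖(if k = 0 then 0 else 𝓕 g (k : ℝ))‖) :=
    Summable.of_nonneg_of_le (fun k => norm_nonneg _) hite (hsum2.mul_left _)
  have : ‖𝓕 g 0 - ∑' k : ℤ, 𝓕 g (k : ℝ)‖ ≤
      H⁻¹ * (2 * a * B / D ^ r) * ∑' k : ℤ, (1 / (k : ℝ) ^ 2) := by
    rw [hsplit]
    have : 𝓕 g 0 - (𝓕 g ((0 : ℤ) : ℝ) + ∑' k : ℤ, if k = 0 then 0 else 𝓕 g (k : ℝ))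
        = -(∑' k : ℤ, if k = 0 then 0 else 𝓕 g (k : ℝ)) := by
      push_cast
      ring
    rw [this, norm_neg]
    calc ‖∑' k : ℤ, if k = 0 then 0 else 𝓕 g (k : ℝ)‖
        ≤ ∑' k : ℤ, ‖(if k = 0 then 0 else 𝓕 g (k : ℝ))‖ :=
          norm_tsum_le_tsum_norm hsummable_ite
      _ ≤ ∑' k : ℤ, H⁻¹ * (2 * a * B / D ^ r) * (1 / (k : ℝ) ^ 2) :=
          Summable.tsum_le_tsum hite hsummable_ite ((hsum2.mul_left _))
      _ = H⁻¹ * (2 * a * B / D ^ r) * ∑' k : ℤ, (1 / (k : ℝ) ^ 2) := by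
          rw [tsum_mul_left]
  calc H * ‖𝓕 g 0 - ∑' k : ℤ, 𝓕 g (k : ℝ)‖
      ≤ H * (H⁻¹ * (2 * a * B / D ^ r) * ∑' k : ℤ, (1 / (k : ℝ) ^ 2)) :=
        mul_le_mul_of_nonneg_left this hH.le
    _ = (∑' k : ℤ, 1 / (k : ℝ) ^ 2) * (2 * a * B) / D ^ r := by
        field_simp

/-- For `r ≥ 2`, `c₀ > 0`, `C_r ≥ 0` there is `C > 0` such that for all
`N`, `h = 1/N`, `δ` with `c₀δ < 1/2`, all `χ` that are `C^r` in `ρ`, vanish for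
`|ρ| ≥ c₀δ` and satisfy `|∂_ρ^r χ| ≤ C_r δ^{−r}`, all `θ ∈ [0,2π]`, `γ ∈ ℝ` and
`(m₁,m₂)` with `|m₁|+|m₂| ≤ N−1`, the radial quadrature error is bounded by
`C δ^{1−r} (N − |m₁ cot θ| − |m₂|)^{−r}` when `|tan θ| ≥ |cot θ|`
(equivalently `|cos θ| ≤ |sin θ|`) and by
`C δ^{1−r} (N − |m₁| − |m₂ tan θ|)^{−r}` otherwise. -/
theorem stmt5 (r : ℕ) (hr : 2 ≤ r) (c₀ Cr : ℝ) (hc₀ : 0 < c₀) (hCr : 0 ≤ Cr) :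
    ∃ C > 0, ∀ N : ℕ, 0 < N → ∀ δ : ℝ, 0 < δ → c₀ * δ < 1 / 2 →
      ∀ χ : ℝ → ℝ → ℂ,
        (∀ θ : ℝ, ContDiff ℝ (r : ℕ∞) fun ρ => χ ρ θ) →
        (∀ ρ θ : ℝ, c₀ * δ ≤ |ρ| → χ ρ θ = 0) →
        (∀ ρ θ : ℝ, Norm.norm (iteratedDeriv r (fun ρ' => χ ρ' θ) ρ) ≤ Cr / δ ^ r) →
        ∀ θ ∈ Set.Icc (0 : ℝ) (2 * π), ∀ γ : ℝ, ∀ m₁ m₂ : ℤ, |m₁| + |m₂| ≤ (N : ℤ) - 1 →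
          (|Real.cos θ| ≤ |Real.sin θ| →
            radErr χ (1 / N) θ γ m₁ m₂ ≤
              C * δ ^ ((1 : ℤ) - r) /
                ((N : ℝ) - |(m₁ : ℝ) * Real.cot θ| - |(m₂ : ℝ)|) ^ r) ∧
          (|Real.sin θ| < |Real.cos θ| →
            radErr χ (1 / N) θ γ m₁ m₂ ≤
              C * δ ^ ((1 : ℤ) - r) /
                ((N : ℝ) - |(m₁ : ℝ)| - |(m₂ : ℝ) * Real.tan θ|) ^ r) := by
  set K : ℝ := ∑' k : ℤ, 1 / (k : ℝ) ^ 2 with hKdef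
  have hKnn : 0 ≤ K := tsum_nonneg (fun k => by positivity)
  have hC2nn : (0 : ℝ) ≤ 2 * c₀ * Cr := by positivity
  refine ⟨K * (2 * c₀ * Cr) + 1, by nlinarith [mul_nonneg hKnn hC2nn], ?_⟩
  intro N hN δ hδ hδhalf χ hχ hvan hder θ hθ γ m₁ m₂ hm
  have hNR : (0 : ℝ) < (N : ℝ) := by exact_mod_cast hN
  have hmR : |(m₁ : ℝ)| + |(m₂ : ℝ)| ≤ (N : ℝ) - 1 := by
    have h := hm
    have : ((|m₁| + |m₂| : ℤ) : ℝ) ≤ (((N : ℤ) - 1 : ℤ) : ℝ) := by exact_mod_cast h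
    push_cast at this
    linarith
  have hM : (1 : ℝ) / 2 ≤ max |Real.cos θ| |Real.sin θ| := by
    by_contra hcon
    push_neg at hcon
    have h1 := lt_of_le_of_lt (le_max_left |Real.cos θ| |Real.sin θ|) hcon
    have h2 := lt_of_le_of_lt (le_max_right |Real.cos θ| |Real.sin θ|) hcon
    nlinarith [Real.sin_sq_add_cos_sq θ, sq_abs (Real.cos θ), sq_abs (Real.sin θ),
      abs_nonneg (Real.cos θ), abs_nonneg (Real.sin θ)]
  have hbound' : ∀ ρ : ℝ, ‖iteratedDeriv r (fun ρ' => χ ρ' θ) ρ‖ ≤ Cr / δ ^ r := by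
    intro ρ
    exact hder ρ θ
  have ha : 0 < c₀ * δ := mul_pos hc₀ hδ
  have hzpow : δ ^ ((1 : ℤ) - (r : ℤ)) = δ / δ ^ r := by
    rw [zpow_sub₀ (ne_of_gt hδ), zpow_one, zpow_natCast]
  constructor
  · -- case |cos| ≤ |sin|
    intro h1
    have hsabs : (1 : ℝ) / 2 ≤ |Real.sin θ| := by rwa [max_eq_right h1] at hM
    have hs0 : Real.sin θ ≠ 0 := by
      intro h; rw [h, abs_zero] at hsabs; linarith
    have hcwt : cwt θ = |Real.sin θ|⁻¹ := by rw [cwt, max_eq_right h1]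
    unfold radErr
    set μ : ℝ := (m₁ : ℝ) * Real.cos θ + (m₂ : ℝ) * Real.sin θ with hμdef
    set H : ℝ := cwt θ * (1 / (N : ℝ)) with hHdef
    set D : ℝ := (N : ℝ) - |(m₁ : ℝ) * Real.cot θ| - |(m₂ : ℝ)| with hDdef
    have hH : 0 < H := by
      rw [hHdef, hcwt]
      exact mul_pos (inv_pos.2 (abs_pos.2 hs0)) (by positivity)
    have hcotle : |Real.cot θ| ≤ 1 := by
      rw [Real.cot_eq_cos_div_sin, abs_div]
      exact (div_le_one (abs_pos.2 hs0)).2 h1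
    have hm1cot : |(m₁ : ℝ) * Real.cot θ| ≤ |(m₁ : ℝ)| := by
      rw [abs_mul]
      exact mul_le_of_le_one_right (abs_nonneg _) hcotle
    have hD1 : (1 : ℝ) ≤ D := by rw [hDdef]; linarith
    have hD : 0 < D := by linarith
    have hA : (0 : ℝ) ≤ |(m₁ : ℝ) * Real.cot θ| + |(m₂ : ℝ)| := by positivity
    have hgeom : ∀ k : ℤ, k ≠ 0 → D * |(k : ℝ)| ≤ 2 * π * |(k : ℝ) / H - μ| := by
      intro k hk
      have hks : (1 : ℝ) ≤ |(k : ℝ)| := by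
        rw [← Int.cast_abs]; exact_mod_cast Int.one_le_abs hk
      have hHval : (k : ℝ) / H = (k : ℝ) * ((N : ℝ) * |Real.sin θ|) := by
        have hHeq : H = ((N : ℝ) * |Real.sin θ|)⁻¹ := by
          rw [hHdef, hcwt, mul_inv, one_div]; ring
        rw [hHeq, div_eq_mul_inv, inv_inv]
      have hcc : |(m₁ : ℝ)| * |Real.cos θ| = |Real.sin θ| * |(m₁ : ℝ) * Real.cot θ| := by
        rw [Real.cot_eq_cos_div_sin, abs_mul, abs_div]
        field_simp [abs_ne_zero.mpr hs0]
      have hμb : |μ| ≤ |Real.sin θ| * (|(m₁ : ℝ) * Real.cot θ| + |(m₂ : ℝ)|) := by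
        calc |μ| ≤ |(m₁ : ℝ)| * |Real.cos θ| + |(m₂ : ℝ)| * |Real.sin θ| := by
              rw [hμdef]
              refine (abs_add_le _ _).trans ?_
              rw [abs_mul, abs_mul]
          _ = |Real.sin θ| * (|(m₁ : ℝ) * Real.cot θ| + |(m₂ : ℝ)|) := by rw [hcc]; ring
      have h7 : |(m₁ : ℝ) * Real.cot θ| + |(m₂ : ℝ)| ≤
          |(k : ℝ)| * (|(m₁ : ℝ) * Real.cot θ| + |(m₂ : ℝ)|) :=
        le_mul_of_one_le_left hA hks
      have hspos : (0 : ℝ) < |Real.sin θ| := abs_pos.2 hs0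
      have hlow : |Real.sin θ| * (|(k : ℝ)| * D) ≤ |(k : ℝ) / H - μ| := by
        have h5 : |(k : ℝ) / H| - |μ| ≤ |(k : ℝ) / H - μ| := abs_sub_abs_le_abs_sub _ _
        have h6 : |(k : ℝ) / H| = |(k : ℝ)| * ((N : ℝ) * |Real.sin θ|) := by
          rw [hHval, abs_mul, abs_of_pos (by positivity : (0:ℝ) < (N : ℝ) * |Real.sin θ|)]
        have t1 : |μ| ≤ |Real.sin θ| * (|(k : ℝ)| * (|(m₁ : ℝ) * Real.cot θ| + |(m₂ : ℝ)|)) := by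
          refine hμb.trans ?_
          have := mul_le_mul_of_nonneg_left h7 hspos.le
          linarith
        rw [h6] at h5
        have t3 : |Real.sin θ| * (|(k : ℝ)| * D) = |(k : ℝ)| * ((N : ℝ) * |Real.sin θ|)
            - |Real.sin θ| * (|(k : ℝ)| * (|(m₁ : ℝ) * Real.cot θ| + |(m₂ : ℝ)|)) := by
          rw [hDdef]; ring
        linarith [h5, t1, t3]
      have h9a : (1 : ℝ) ≤ 2 * π * |Real.sin θ| := by nlinarith [Real.pi_gt_three, hsabs]
      have h9 : D * |(k : ℝ)| ≤ 2 * π * (|Real.sin θ| * (|(k : ℝ)| * D)) := by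
        have hh := mul_le_mul_of_nonneg_right h9a (mul_nonneg hD.le (abs_nonneg (k : ℝ)))
        calc D * |(k : ℝ)| = 1 * (D * |(k : ℝ)|) := by ring
          _ ≤ 2 * π * |Real.sin θ| * (D * |(k : ℝ)|) := hh
          _ = 2 * π * (|Real.sin θ| * (|(k : ℝ)| * D)) := by ring
      calc D * |(k : ℝ)| ≤ 2 * π * (|Real.sin θ| * (|(k : ℝ)| * D)) := h9
        _ ≤ 2 * π * |(k : ℝ) / H - μ| := by
            exact mul_le_mul_of_nonneg_left hlow (by positivity)
    have hcast : ((m₁ : ℂ) * (Real.cos θ : ℂ) + (m₂ : ℂ) * (Real.sin θ : ℂ)) = ((μ : ℝ) : ℂ) := by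
      rw [hμdef]; push_cast; ring
    have hHcast : ((cwt θ : ℝ) : ℂ) * ((1 / (N : ℝ) : ℝ) : ℂ) = ((H : ℝ) : ℂ) := by
      rw [hHdef]; push_cast; ring
    simp only [hcast, hHcast]
    have key := poisson_bound hr (hχ θ) ha (fun ρ hρ => hvan ρ θ hρ) hbound' hH γ μ hD hgeom
    refine le_trans key ?_
    have hnum : K * (2 * (c₀ * δ) * (Cr / δ ^ r)) ≤ (K * (2 * c₀ * Cr) + 1) * δ ^ ((1:ℤ) - (r:ℤ)) := by
      rw [hzpow]
      have he : K * (2 * (c₀ * δ) * (Cr / δ ^ r)) = (K * (2 * c₀ * Cr)) * (δ / δ ^ r) := by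
        ring
      rw [he]
      have hpos : (0 : ℝ) ≤ δ / δ ^ r := by positivity
      have hC : K * (2 * c₀ * Cr) ≤ K * (2 * c₀ * Cr) + 1 := by linarith
      exact mul_le_mul_of_nonneg_right hC hpos
    exact (div_le_div_iff_of_pos_right (pow_pos hD r)).mpr hnum
  · -- case |sin| < |cos|
    intro h2
    have hcabs : (1 : ℝ) / 2 ≤ |Real.cos θ| := by rwa [max_eq_left h2.le] at hM
    have hc0 : Real.cos θ ≠ 0 := by
      intro h; rw [h, abs_zero] at hcabs; linarith
    have hcwt : cwt θ = |Real.cos θ|⁻¹ := by rw [cwt, max_eq_left h2.le]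
    unfold radErr
    set μ : ℝ := (m₁ : ℝ) * Real.cos θ + (m₂ : ℝ) * Real.sin θ with hμdef
    set H : ℝ := cwt θ * (1 / (N : ℝ)) with hHdef
    set D : ℝ := (N : ℝ) - |(m₁ : ℝ)| - |(m₂ : ℝ) * Real.tan θ| with hDdef
    have hH : 0 < H := by
      rw [hHdef, hcwt]
      exact mul_pos (inv_pos.2 (abs_pos.2 hc0)) (by positivity)
    have htanle : |Real.tan θ| ≤ 1 := by
      rw [Real.tan_eq_sin_div_cos, abs_div]
      exact (div_le_one (abs_pos.2 hc0)).2 h2.le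
    have hm2tan : |(m₂ : ℝ) * Real.tan θ| ≤ |(m₂ : ℝ)| := by
      rw [abs_mul]
      exact mul_le_of_le_one_right (abs_nonneg _) htanle
    have hD1 : (1 : ℝ) ≤ D := by rw [hDdef]; linarith
    have hD : 0 < D := by linarith
    have hA : (0 : ℝ) ≤ |(m₁ : ℝ)| + |(m₂ : ℝ) * Real.tan θ| := by positivity
    have hgeom : ∀ k : ℤ, k ≠ 0 → D * |(k : ℝ)| ≤ 2 * π * |(k : ℝ) / H - μ| := by
      intro k hk
      have hks : (1 : ℝ) ≤ |(k : ℝ)| := by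
        rw [← Int.cast_abs]; exact_mod_cast Int.one_le_abs hk
      have hHval : (k : ℝ) / H = (k : ℝ) * ((N : ℝ) * |Real.cos θ|) := by
        have hHeq : H = ((N : ℝ) * |Real.cos θ|)⁻¹ := by
          rw [hHdef, hcwt, mul_inv, one_div]; ring
        rw [hHeq, div_eq_mul_inv, inv_inv]
      have hcc : |(m₂ : ℝ)| * |Real.sin θ| = |Real.cos θ| * |(m₂ : ℝ) * Real.tan θ| := by
        rw [Real.tan_eq_sin_div_cos, abs_mul, abs_div]
        field_simp [abs_ne_zero.mpr hc0]
      have hμb : |μ| ≤ |Real.cos θ| * (|(m₁ : ℝ)| + |(m₂ : ℝ) * Real.tan θ|) := by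
        calc |μ| ≤ |(m₁ : ℝ)| * |Real.cos θ| + |(m₂ : ℝ)| * |Real.sin θ| := by
              rw [hμdef]
              refine (abs_add_le _ _).trans ?_
              rw [abs_mul, abs_mul]
          _ = |Real.cos θ| * (|(m₁ : ℝ)| + |(m₂ : ℝ) * Real.tan θ|) := by rw [hcc]; ring
      have h7 : |(m₁ : ℝ)| + |(m₂ : ℝ) * Real.tan θ| ≤
          |(k : ℝ)| * (|(m₁ : ℝ)| + |(m₂ : ℝ) * Real.tan θ|) :=
        le_mul_of_one_le_left hA hks
      have hcpos : (0 : ℝ) < |Real.cos θ| := abs_pos.2 hc0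
      have hlow : |Real.cos θ| * (|(k : ℝ)| * D) ≤ |(k : ℝ) / H - μ| := by
        have h5 : |(k : ℝ) / H| - |μ| ≤ |(k : ℝ) / H - μ| := abs_sub_abs_le_abs_sub _ _
        have h6 : |(k : ℝ) / H| = |(k : ℝ)| * ((N : ℝ) * |Real.cos θ|) := by
          rw [hHval, abs_mul, abs_of_pos (by positivity : (0:ℝ) < (N : ℝ) * |Real.cos θ|)]
        have t1 : |μ| ≤ |Real.cos θ| * (|(k : ℝ)| * (|(m₁ : ℝ)| + |(m₂ : ℝ) * Real.tan θ|)) := by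
          refine hμb.trans ?_
          have := mul_le_mul_of_nonneg_left h7 hcpos.le
          linarith
        rw [h6] at h5
        have t3 : |Real.cos θ| * (|(k : ℝ)| * D) = |(k : ℝ)| * ((N : ℝ) * |Real.cos θ|)
            - |Real.cos θ| * (|(k : ℝ)| * (|(m₁ : ℝ)| + |(m₂ : ℝ) * Real.tan θ|)) := by
          rw [hDdef]; ring
        linarith [h5, t1, t3]
      have h9a : (1 : ℝ) ≤ 2 * π * |Real.cos θ| := by nlinarith [Real.pi_gt_three, hcabs]
      have h9 : D * |(k : ℝ)| ≤ 2 * π * (|Real.cos θ| * (|(k : ℝ)| * D)) := by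
        have hh := mul_le_mul_of_nonneg_right h9a (mul_nonneg hD.le (abs_nonneg (k : ℝ)))
        calc D * |(k : ℝ)| = 1 * (D * |(k : ℝ)|) := by ring
          _ ≤ 2 * π * |Real.cos θ| * (D * |(k : ℝ)|) := hh
          _ = 2 * π * (|Real.cos θ| * (|(k : ℝ)| * D)) := by ring
      calc D * |(k : ℝ)| ≤ 2 * π * (|Real.cos θ| * (|(k : ℝ)| * D)) := h9
        _ ≤ 2 * π * |(k : ℝ) / H - μ| := by
            exact mul_le_mul_of_nonneg_left hlow (by positivity)
    have hcast : ((m₁ : ℂ) * (Real.cos θ : ℂ) + (m₂ : ℂ) * (Real.sin θ : ℂ)) = ((μ : ℝ) : ℂ) := by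
      rw [hμdef]; push_cast; ring
    have hHcast : ((cwt θ : ℝ) : ℂ) * ((1 / (N : ℝ) : ℝ) : ℂ) = ((H : ℝ) : ℂ) := by
      rw [hHdef]; push_cast; ring
    simp only [hcast, hHcast]
    have key := poisson_bound hr (hχ θ) ha (fun ρ hρ => hvan ρ θ hρ) hbound' hH γ μ hD hgeom
    refine le_trans key ?_
    have hnum : K * (2 * (c₀ * δ) * (Cr / δ ^ r)) ≤ (K * (2 * c₀ * Cr) + 1) * δ ^ ((1:ℤ) - (r:ℤ)) := by
      rw [hzpow]
      have he : K * (2 * (c₀ * δ) * (Cr / δ ^ r)) = (K * (2 * c₀ * Cr)) * (δ / δ ^ r) := by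
        ring
      rw [he]
      have hpos : (0 : ℝ) ≤ δ / δ ^ r := by positivity
      have hC : K * (2 * c₀ * Cr) ≤ K * (2 * c₀ * Cr) + 1 := by linarith
      exact mul_le_mul_of_nonneg_right hC hpos
    exact (div_le_div_iff_of_pos_right (pow_pos hD r)).mpr hnum
end

section
/- For every integer N ≥ 1 and every ξ ∈ [0,1), one has Σ_{(n,m)∈Ξ_N^+} 1/(N − n − m ξ)^4 ≤ min{4, 8/(N²(1−ξ)²)}; moreover for ξ = 1 the sum is still bounded by 4. Here Ξ_N^+ := {(n,m) ∈ ℤ² : 0 < n ≤ N/2, 0 < m ≤ N/2, N/2 < n + m < N}. -/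
/-- The index set `Ξ_N^+ = {(n,m) ∈ ℤ² : 0 < n ≤ N/2, 0 < m ≤ N/2, N/2 < n+m < N}`
(the half-integer comparisons with `N/2` are expressed by doubling). -/
noncomputable def XiPlus (N : ℕ) : Finset (ℤ × ℤ) :=
  (Finset.Ioc 0 (N : ℤ) ×ˢ Finset.Ioc 0 (N : ℤ)).filter fun p =>
    2 * p.1 ≤ (N : ℤ) ∧ 2 * p.2 ≤ (N : ℤ) ∧ (N : ℤ) < 2 * (p.1 + p.2) ∧ p.1 + p.2 < (N : ℤ)


open Finset

def Lx (N a : ℕ) : ℕ := max 1 ((N+1)/2 - a)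

noncomputable def gridSum (N : ℕ) (u : ℝ) : ℝ :=
  ∑ a ∈ Finset.Icc 1 ((N-1)/2), ∑ m ∈ Finset.Icc (Lx N a) (N/2),
    1 / ((a:ℝ) + (m:ℝ)*u)^4

lemma key4 {y d : ℝ} (hy : 0 < y) (hd : 0 < d) :
    1/(y+d)^4 ≤ 1/(3*d) * (1/y^3 - 1/(y+d)^3) := by
  have hyd : 0 < y + d := by linarith
  rw [div_sub_div _ _ (by positivity) (by positivity), div_mul_div_comm,
    div_le_div_iff₀ (by positivity) (by positivity), one_mul, one_mul]
  nlinarith [pow_pos hy 3, pow_pos hyd 3, mul_pos hd (mul_pos (pow_pos hy 2) (pow_pos hyd 4)),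
    mul_pos (mul_pos hd hd) (mul_pos hy (pow_pos hyd 4)),
    mul_pos (mul_pos (mul_pos hd hd) hd) (pow_pos hyd 4)]

lemma tel {f φ : ℕ → ℝ} {s n : ℕ} (hsn : s ≤ n)
    (h : ∀ a, s ≤ a → a ≤ n → f a ≤ φ (a-1) - φ a) :
    ∑ a ∈ Finset.Icc s n, f a ≤ φ (s-1) - φ n := by
  induction n, hsn using Nat.le_induction with
  | base =>
      rw [Finset.Icc_self, Finset.sum_singleton]
      exact h s le_rfl le_rfl
  | succ n hn ih =>
      rw [Finset.sum_Icc_succ_top (by omega)]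
      have h1 := ih (fun a ha han => h a ha (by omega))
      have h2 := h (n+1) (by omega) le_rfl
      have hh : (n+1) - 1 = n := by omega
      rw [hh] at h2
      linarith

/-- Step 1: the sum over `XiPlus` is dominated by the grid sum. -/
lemma step1 (N : ℕ) (ξ : ℝ) (hξ0 : 0 ≤ ξ) (hξ1 : ξ ≤ 1) :
    (∑ p ∈ XiPlus N, 1 / ((N : ℝ) - (p.1 : ℝ) - (p.2 : ℝ) * ξ) ^ 4) ≤ gridSum N (1-ξ) := by
  classical
  set e : ℤ × ℤ → ℕ × ℕ := fun p => ((↑N - p.1 - p.2).toNat, p.2.toNat) with he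
  set g : ℕ × ℕ → ℝ := fun q => 1 / ((q.1:ℝ) + (q.2:ℝ)*(1-ξ))^4 with hg
  have hmem : ∀ p ∈ XiPlus N, 0 < p.1 ∧ p.1 ≤ (N:ℤ) ∧ 0 < p.2 ∧ p.2 ≤ (N:ℤ) ∧
      2*p.1 ≤ (N:ℤ) ∧ 2*p.2 ≤ (N:ℤ) ∧ (N:ℤ) < 2*(p.1+p.2) ∧ p.1+p.2 < (N:ℤ) := by
    intro p hp
    simp only [XiPlus, Finset.mem_filter, Finset.mem_product, Finset.mem_Ioc] at hp
    tauto
  have hcongr : ∀ p ∈ XiPlus N,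
      1 / ((N : ℝ) - (p.1 : ℝ) - (p.2 : ℝ) * ξ) ^ 4 = g (e p) := by
    intro p hp
    obtain ⟨h1, h2, h3, h4, h5, h6, h7, h8⟩ := hmem p hp
    have ha : (((↑N - p.1 - p.2).toNat : ℕ) : ℝ) = (N:ℝ) - (p.1:ℝ) - (p.2:ℝ) := by
      have h : ((↑N - p.1 - p.2).toNat : ℤ) = (↑N - p.1 - p.2) := Int.toNat_of_nonneg (by omega)
      rw [← Int.cast_natCast, h]
      push_cast
      ring
    have hb : ((p.2.toNat : ℕ) : ℝ) = (p.2:ℝ) := by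
      have h : ((p.2.toNat : ℕ) : ℤ) = p.2 := Int.toNat_of_nonneg (by omega)
      rw [← Int.cast_natCast, h]
    simp only [hg, he, ha, hb]
    ring_nf
  rw [Finset.sum_congr rfl hcongr]
  have hinj : ∀ p ∈ XiPlus N, ∀ q ∈ XiPlus N, e p = e q → p = q := by
    intro p hp q hq hpq
    obtain ⟨p1, p2, p3, p4, p5, p6, p7, p8⟩ := hmem p hp
    obtain ⟨q1, q2, q3, q4, q5, q6, q7, q8⟩ := hmem q hq
    simp only [he, Prod.mk.injEq] at hpq
    obtain ⟨hA, hB⟩ := hpq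
    obtain ⟨px, py⟩ := p
    obtain ⟨qx, qy⟩ := q
    simp only [Prod.mk.injEq] at hA hB ⊢
    simp only at p1 p2 p3 p4 p5 p6 p7 p8 q1 q2 q3 q4 q5 q6 q7 q8
    omega
  rw [← Finset.sum_image hinj]
  have hsub : (XiPlus N).image e ⊆
      ((Finset.Icc 1 ((N-1)/2)) ×ˢ (Finset.Icc 1 (N/2))).filter (fun q => Lx N q.1 ≤ q.2) := by
    intro q hq
    simp only [Finset.mem_image] at hq
    obtain ⟨p, hp, rfl⟩ := hq
    obtain ⟨p1, p2, p3, p4, p5, p6, p7, p8⟩ := hmem p hp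
    rw [Finset.mem_filter]
    simp only [Finset.mem_filter, Finset.mem_product, Finset.mem_Icc, he, Lx]
    omega
  refine le_trans (Finset.sum_le_sum_of_subset_of_nonneg hsub ?_) ?_
  · intro q _ _
    simp only [hg]
    positivity
  · rw [Finset.sum_filter, Finset.sum_product]
    apply le_of_eq
    apply Finset.sum_congr rfl
    intro a _
    rw [← Finset.sum_filter]
    apply Finset.sum_congr
    · ext m
      rw [Finset.mem_filter]
      simp only [Finset.mem_filter, Finset.mem_Icc, Lx]
      omega
    · intro m _; rfl

/-- cardinality of the fibers -/
lemma card_fiber (N a : ℕ) : ((Finset.Icc (Lx N a) (N/2)).card : ℝ) ≤ (a:ℝ) + 1 := by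
  rw [Nat.card_Icc]
  have : (N/2 + 1 - Lx N a) ≤ a + 1 := by simp only [Lx]; omega
  calc ((N/2 + 1 - Lx N a : ℕ) : ℝ) ≤ ((a+1 : ℕ) : ℝ) := by exact_mod_cast this
    _ = (a:ℝ) + 1 := by push_cast; ring

lemma lx_ge (N a : ℕ) : (N:ℝ)/2 - (a:ℝ) ≤ ((Lx N a : ℕ) : ℝ) := by
  have h : N ≤ 2 * (Lx N a) + 2*a := by simp only [Lx]; omega
  have := (Nat.cast_le (α := ℝ)).mpr h
  push_cast at this
  linarith

lemma lx_ge_one (N a : ℕ) : (1:ℝ) ≤ ((Lx N a : ℕ) : ℝ) := by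
  have h : 1 ≤ Lx N a := by simp [Lx]
  exact_mod_cast h

/-- V1: absolute bound by 3 (any u ≥ 0). -/
lemma gridV1 (N : ℕ) {u : ℝ} (hu : 0 ≤ u) : gridSum N u ≤ 3 := by
  have hstep : ∀ a ∈ Finset.Icc 1 ((N-1)/2),
      (∑ m ∈ Finset.Icc (Lx N a) (N/2), 1 / ((a:ℝ) + (m:ℝ)*u)^4) ≤ 2/(a:ℝ)^3 := by
    intro a ha
    have ha1 : 1 ≤ a := (Finset.mem_Icc.mp ha).1
    have har : (1:ℝ) ≤ (a:ℝ) := by exact_mod_cast ha1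
    have hpos : (0:ℝ) < a := by linarith
    have hterm : ∀ m ∈ Finset.Icc (Lx N a) (N/2), 1 / ((a:ℝ) + (m:ℝ)*u)^4 ≤ 1/(a:ℝ)^4 := by
      intro m _
      have h1 : (a:ℝ) ≤ (a:ℝ) + (m:ℝ)*u := by
        have : (0:ℝ) ≤ (m:ℝ)*u := by positivity
        linarith
      exact one_div_le_one_div_of_le (by positivity) (by
        exact pow_le_pow_left₀ (le_of_lt hpos) h1 4)
    calc (∑ m ∈ Finset.Icc (Lx N a) (N/2), 1 / ((a:ℝ) + (m:ℝ)*u)^4)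
        ≤ ((Finset.Icc (Lx N a) (N/2)).card : ℝ) * (1/(a:ℝ)^4) := by
          rw [← nsmul_eq_mul]
          exact Finset.sum_le_card_nsmul _ _ _ hterm
      _ ≤ ((a:ℝ)+1) * (1/(a:ℝ)^4) := by
          apply mul_le_mul_of_nonneg_right (card_fiber N a) (by positivity)
      _ ≤ 2/(a:ℝ)^3 := by
          rw [mul_one_div, div_le_div_iff₀ (by positivity) (by positivity)]
          nlinarith [pow_pos hpos 3, pow_pos hpos 4]
  refine le_trans (Finset.sum_le_sum hstep) ?_
  rcases Nat.lt_or_ge ((N-1)/2) 1 with hA | hA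
  · have : Finset.Icc 1 ((N-1)/2) = ∅ := by
      apply Finset.Icc_eq_empty; omega
    rw [this]; norm_num
  · have hsplit : Finset.Icc 1 ((N-1)/2) = insert 1 (Finset.Icc 2 ((N-1)/2)) := by
      ext x; simp only [Finset.mem_insert, Finset.mem_Icc]; omega
    rw [hsplit, Finset.sum_insert (by simp)]
    have htail : (∑ a ∈ Finset.Icc 2 ((N-1)/2), 2/(a:ℝ)^3) ≤ 1 := by
      rcases Nat.lt_or_ge ((N-1)/2) 2 with hB | hB
      · have : Finset.Icc 2 ((N-1)/2) = ∅ := by apply Finset.Icc_eq_empty; omega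
        rw [this]; norm_num
      · have ht := tel (f := fun a => 2/(a:ℝ)^3) (φ := fun a => 1/(a:ℝ)^2) hB ?_
        · have hlast : (0:ℝ) ≤ ((((N-1)/2 : ℕ):ℝ)^2)⁻¹ := by positivity
          norm_num at ht
          linarith
        · intro a ha2 _
          beta_reduce
          have har : (2:ℝ) ≤ (a:ℝ) := by exact_mod_cast ha2
          have hc : (((a-1 : ℕ)):ℝ) = (a:ℝ) - 1 := by
            have : 1 ≤ a := by omega
            push_cast [Nat.cast_sub this]; ring
          rw [hc]
          have hpos : (0:ℝ) < (a:ℝ) - 1 := by linarith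
          have hpos2 : (0:ℝ) < (a:ℝ) := by linarith
          rw [div_sub_div _ _ (by positivity) (by positivity), div_le_div_iff₀ (by positivity) (by positivity)]
          nlinarith [pow_pos hpos 2, pow_pos hpos2 3, pow_pos hpos2 2, mul_pos hpos hpos2]
    norm_num
    linarith


lemma keyDelta {z v : ℝ} (hz : 0 < z) (hv : 0 < v) :
    2*v/(z+v)^3 ≤ 1/z^2 - 1/(z+v)^2 := by
  have hw : 0 < z + v := by linarith
  rw [div_sub_div _ _ (by positivity) (by positivity),
    div_le_div_iff₀ (by positivity) (by positivity)]
  nlinarith [mul_nonneg (mul_nonneg (mul_pos hv hv).le (sq_nonneg (z+v)))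
    (by linarith : (0:ℝ) ≤ 3*z+v)]

lemma pointwiseV2 {c v A : ℝ} (hc : 0 ≤ c) (hv : 0 < v) (hA : 2 ≤ A) :
    (A+1)/(c+A*v)^4 ≤ (1/(2*v^2*(c+(A-1)*v)^2) + 1/(3*v*(c+(A-1)*v)^3))
      - (1/(2*v^2*(c+A*v)^2) + 1/(3*v*(c+A*v)^3)) := by
  have hz0 : 0 < c+(A-1)*v := by nlinarith
  have hy0 : 0 < c+A*v := by nlinarith
  have hzy : c+A*v = (c+(A-1)*v) + v := by ring
  have p2 : 1/(c+A*v)^4 ≤ 1/(3*v) * (1/(c+(A-1)*v)^3 - 1/(c+A*v)^3) := by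
    rw [hzy]; exact key4 hz0 hv
  have hΔ : 2*v/(c+A*v)^3 ≤ 1/(c+(A-1)*v)^2 - 1/(c+A*v)^2 := by
    rw [hzy]; exact keyDelta hz0 hv
  have hay : A*v ≤ c+A*v := by linarith
  have p1 : A/(c+A*v)^4 ≤ 1/(2*v^2) * (1/(c+(A-1)*v)^2 - 1/(c+A*v)^2) := by
    calc A/(c+A*v)^4 ≤ 1/(v*(c+A*v)^3) := by
          rw [div_le_div_iff₀ (by positivity) (by positivity)]
          nlinarith [mul_le_mul_of_nonneg_right hay (le_of_lt (pow_pos hy0 3))]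
      _ = 1/(2*v^2) * (2*v/(c+A*v)^3) := by field_simp
      _ ≤ 1/(2*v^2) * (1/(c+(A-1)*v)^2 - 1/(c+A*v)^2) := by
          apply mul_le_mul_of_nonneg_left hΔ (by positivity)
  have expand : (A+1)/(c+A*v)^4 = A/(c+A*v)^4 + 1/(c+A*v)^4 := by ring
  have goal_eq : (1/(2*v^2*(c+(A-1)*v)^2) + 1/(3*v*(c+(A-1)*v)^3))
      - (1/(2*v^2*(c+A*v)^2) + 1/(3*v*(c+A*v)^3))
      = 1/(2*v^2) * (1/(c+(A-1)*v)^2 - 1/(c+A*v)^2)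
        + 1/(3*v) * (1/(c+(A-1)*v)^3 - 1/(c+A*v)^3) := by
    simp only [one_div, mul_inv]
    ring
  rw [expand, goal_eq]
  linarith [p1, p2]

/-- numeric inequality for the regime u ≤ 1/2 -/
lemma F4 {c v : ℝ} (hc : 0 < c) (hv : 1/2 ≤ v) :
    2/(c+v)^4 + 1/(2*v^2*(c+v)^2) + 1/(3*v*(c+v)^3) ≤ 2/c^2 := by
  have hv0 : 0 < v := by linarith
  have hw : 0 < c + v := by linarith
  have e1 : 2/(c+v)^4 + 1/(2*v^2*(c+v)^2) + 1/(3*v*(c+v)^3)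
      = (12*v^2*c^2 + 3*c^2*(c+v)^2 + 2*v*c^2*(c+v))/(6*v^2*c^2*(c+v)^4) := by
    field_simp; ring
  have e2 : 2/c^2 = (12*v^2*(c+v)^4)/(6*v^2*c^2*(c+v)^4) := by
    field_simp; ring
  rw [e1, e2]
  gcongr
  have ht : 0 ≤ v - 1/2 := by linarith
  have hc' : (0:ℝ) ≤ c := hc.le
  nlinarith [mul_nonneg (pow_nonneg hc' 4) (pow_nonneg ht 2),
    mul_nonneg (pow_nonneg hc' 4) ht,
    mul_nonneg (pow_nonneg hc' 3) (pow_nonneg ht 3),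
    mul_nonneg (pow_nonneg hc' 3) (pow_nonneg ht 2),
    mul_nonneg (pow_nonneg hc' 3) ht, pow_nonneg hc' 3,
    mul_nonneg (pow_nonneg hc' 2) (pow_nonneg ht 4),
    mul_nonneg (pow_nonneg hc' 2) (pow_nonneg ht 3),
    mul_nonneg (pow_nonneg hc' 2) (pow_nonneg ht 2),
    mul_nonneg (pow_nonneg hc' 2) ht, pow_nonneg hc' 2,
    mul_nonneg hc' (pow_nonneg ht 5), mul_nonneg hc' (pow_nonneg ht 4),
    mul_nonneg hc' (pow_nonneg ht 3), mul_nonneg hc' (pow_nonneg ht 2),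
    mul_nonneg hc' ht, pow_nonneg ht 6, pow_nonneg ht 5, pow_nonneg ht 4,
    pow_nonneg ht 3, pow_nonneg ht 2, ht, hc']

/-- V2 : the telescoping bound, for all 0 < u < 1. -/
lemma gridV2 (N : ℕ) {u : ℝ} (hu0 : 0 < u) (hu1 : u < 1) :
    gridSum N u ≤ 2/((N:ℝ)*u/2 + (1-u))^4 + 1/(2*(1-u)^2*((N:ℝ)*u/2 + (1-u))^2)
      + 1/(3*(1-u)*((N:ℝ)*u/2 + (1-u))^3) := by
  have hv0 : 0 < 1 - u := by linarith
  have hc0 : 0 ≤ (N:ℝ)*u/2 := by positivity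
  have hw : 0 < (N:ℝ)*u/2 + (1-u) := by linarith
  set v : ℝ := 1 - u with hv
  set c : ℝ := (N:ℝ)*u/2 with hc
  have hstep : ∀ a ∈ Finset.Icc 1 ((N-1)/2),
      (∑ m ∈ Finset.Icc (Lx N a) (N/2), 1 / ((a:ℝ) + (m:ℝ)*u)^4)
        ≤ ((a:ℝ)+1) / (c + (a:ℝ)*v)^4 := by
    intro a ha
    have ha1 : 1 ≤ a := (Finset.mem_Icc.mp ha).1
    have har : (1:ℝ) ≤ (a:ℝ) := by exact_mod_cast ha1
    have hy0 : 0 < c + (a:ℝ)*v := by nlinarith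
    have hterm : ∀ m ∈ Finset.Icc (Lx N a) (N/2),
        1 / ((a:ℝ) + (m:ℝ)*u)^4 ≤ 1/(c + (a:ℝ)*v)^4 := by
      intro m hm
      have hmL : (Lx N a : ℝ) ≤ (m:ℝ) := by
        exact_mod_cast (Finset.mem_Icc.mp hm).1
      have h2 := lx_ge N a
      have h3 : (N:ℝ)/2 - (a:ℝ) ≤ (m:ℝ) := by linarith
      have h4 : c + (a:ℝ)*v ≤ (a:ℝ) + (m:ℝ)*u := by
        have h5 : ((N:ℝ)/2 - (a:ℝ))*u ≤ (m:ℝ)*u :=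
          mul_le_mul_of_nonneg_right h3 hu0.le
        simp only [hc, hv]; nlinarith
      exact one_div_le_one_div_of_le (by positivity) (pow_le_pow_left₀ hy0.le h4 4)
    calc (∑ m ∈ Finset.Icc (Lx N a) (N/2), 1 / ((a:ℝ) + (m:ℝ)*u)^4)
        ≤ ((Finset.Icc (Lx N a) (N/2)).card : ℝ) * (1/(c + (a:ℝ)*v)^4) := by
          rw [← nsmul_eq_mul]
          exact Finset.sum_le_card_nsmul _ _ _ hterm
      _ ≤ ((a:ℝ)+1) * (1/(c + (a:ℝ)*v)^4) :=
          mul_le_mul_of_nonneg_right (card_fiber N a) (by positivity)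
      _ = ((a:ℝ)+1) / (c + (a:ℝ)*v)^4 := by rw [mul_one_div]
  refine le_trans (Finset.sum_le_sum hstep) ?_
  rcases Nat.lt_or_ge ((N-1)/2) 1 with hA | hA
  · have hempty : Finset.Icc 1 ((N-1)/2) = ∅ := by apply Finset.Icc_eq_empty; omega
    rw [hempty, Finset.sum_empty]
    positivity
  · have hsplit : Finset.Icc 1 ((N-1)/2) = insert 1 (Finset.Icc 2 ((N-1)/2)) := by
      ext x; simp only [Finset.mem_insert, Finset.mem_Icc]; omega
    rw [hsplit, Finset.sum_insert (by simp)]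
    have htail : (∑ a ∈ Finset.Icc 2 ((N-1)/2), ((a:ℝ)+1) / (c + (a:ℝ)*v)^4)
        ≤ 1/(2*v^2*(c+v)^2) + 1/(3*v*(c+v)^3) := by
      rcases Nat.lt_or_ge ((N-1)/2) 2 with hB | hB
      · have hempty : Finset.Icc 2 ((N-1)/2) = ∅ := by apply Finset.Icc_eq_empty; omega
        rw [hempty, Finset.sum_empty]
        positivity
      · have ht := tel (f := fun a : ℕ => ((a:ℝ)+1) / (c + (a:ℝ)*v)^4)
          (φ := fun a : ℕ => 1/(2*v^2*(c + (a:ℝ)*v)^2) + 1/(3*v*(c + (a:ℝ)*v)^3)) hB ?_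
        · beta_reduce at ht
          have h5 : (1:ℝ) ≤ (((N-1)/2 : ℕ):ℝ) := by
            have : (1:ℕ) ≤ (N-1)/2 := by omega
            exact_mod_cast this
          have hlastpos : (0:ℝ) ≤ 1/(2*v^2*(c + (((N-1)/2 : ℕ):ℝ)*v)^2)
              + 1/(3*v*(c + (((N-1)/2 : ℕ):ℝ)*v)^3) := by
            have hp : 0 < c + (((N-1)/2 : ℕ):ℝ)*v := by nlinarith
            positivity
          have hcast : (((2:ℕ)-1 : ℕ):ℝ) = 1 := by norm_num
          rw [hcast] at ht
          simp only [one_mul] at ht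
          linarith
        · intro a ha2 _
          beta_reduce
          have har : (2:ℝ) ≤ (a:ℝ) := by exact_mod_cast ha2
          have hcast : (((a-1 : ℕ)):ℝ) = (a:ℝ) - 1 := by
            have h1 : 1 ≤ a := by omega
            push_cast [Nat.cast_sub h1]; ring
          rw [hcast]
          exact pointwiseV2 hc0 hv0 (by linarith)
    have hone : ((1:ℕ):ℝ) = 1 := by norm_num
    rw [hone]
    simp only [one_mul]
    have h12 : (1:ℝ)+1 = 2 := by norm_num
    rw [h12]
    linarith

/-- V3 inner: telescoping over m. -/
lemma gridV3inner (N a : ℕ) {u : ℝ} (hu0 : 0 < u) (ha : 1 ≤ a) :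
    (∑ m ∈ Finset.Icc (Lx N a) (N/2), 1/((a:ℝ)+(m:ℝ)*u)^4)
      ≤ 1/((a:ℝ) + (Lx N a:ℝ)*u)^4 + 1/(3*u) * (1/((a:ℝ) + (Lx N a:ℝ)*u)^3) := by
  have hL1 : (1:ℝ) ≤ (Lx N a : ℝ) := lx_ge_one N a
  have har : (1:ℝ) ≤ (a:ℝ) := by exact_mod_cast ha
  have hX : 0 < (a:ℝ) + (Lx N a:ℝ)*u := by nlinarith
  rcases Nat.lt_or_ge (N/2) (Lx N a) with hLM | hLM
  · rw [Finset.Icc_eq_empty (by omega), Finset.sum_empty]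
    positivity
  · have hsplit : Finset.Icc (Lx N a) (N/2)
        = insert (Lx N a) (Finset.Icc (Lx N a + 1) (N/2)) := by
      ext x; simp only [Finset.mem_insert, Finset.mem_Icc]; omega
    rw [hsplit, Finset.sum_insert (by simp)]
    have htail : (∑ m ∈ Finset.Icc (Lx N a + 1) (N/2), 1/((a:ℝ)+(m:ℝ)*u)^4)
        ≤ 1/(3*u) * (1/((a:ℝ) + (Lx N a:ℝ)*u)^3) := by
      rcases Nat.lt_or_ge (N/2) (Lx N a + 1) with hB | hB
      · rw [Finset.Icc_eq_empty (by omega), Finset.sum_empty]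
        positivity
      · have ht := tel (f := fun m : ℕ => 1/((a:ℝ)+(m:ℝ)*u)^4)
          (φ := fun m : ℕ => 1/(3*u) * (1/((a:ℝ)+(m:ℝ)*u)^3)) hB ?_
        · beta_reduce at ht
          have hcast : ((Lx N a + 1 - 1 : ℕ):ℝ) = (Lx N a : ℝ) := by norm_num
          rw [hcast] at ht
          have hXM : (0:ℝ) < (a:ℝ)+((N/2:ℕ):ℝ)*u := by
            have h0 : (0:ℝ) ≤ ((N/2:ℕ):ℝ) := by positivity
            nlinarith
          have hMpos : (0:ℝ) ≤ 1/(3*u) * (1/((a:ℝ)+((N/2:ℕ):ℝ)*u)^3) := by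
            apply le_of_lt
            exact mul_pos (by positivity) (one_div_pos.mpr (pow_pos hXM 3))
          linarith
        · intro m hm2 _
          beta_reduce
          have hm1 : 1 ≤ m := by omega
          have hmr : (Lx N a : ℝ) + 1 ≤ (m:ℝ) := by exact_mod_cast hm2
          have hcast : ((m-1:ℕ):ℝ) = (m:ℝ)-1 := by
            push_cast [Nat.cast_sub hm1]; ring
          rw [hcast]
          have hy0 : 0 < (a:ℝ) + ((m:ℝ)-1)*u := by nlinarith
          have key := key4 hy0 hu0
          have e : (a:ℝ) + ((m:ℝ)-1)*u + u = (a:ℝ) + (m:ℝ)*u := by ring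
          rw [e, mul_sub] at key
          exact key
    linarith

lemma lx_half (N a : ℕ) {u : ℝ} (hu1 : u ≤ 1) (hu0 : 0 ≤ u) :
    (N:ℝ)*u/2 ≤ (a:ℝ) + (Lx N a:ℝ)*u := by
  have hN : N ≤ 2*(a + Lx N a) := by simp only [Lx]; omega
  have hNr : (N:ℝ) ≤ 2*((a:ℝ) + (Lx N a:ℝ)) := by exact_mod_cast hN
  have ha : (0:ℝ) ≤ (a:ℝ) := by positivity
  nlinarith

/-- V3, large c -/
lemma gridV3big (N : ℕ) {u : ℝ} (hu : 1/2 ≤ u) (hu1 : u ≤ 1) (hc : 3 ≤ (N:ℝ)*u/2) :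
    gridSum N u ≤ 2/((N:ℝ)*u/2)^2 := by
  have hu0 : 0 < u := by linarith
  set c : ℝ := (N:ℝ)*u/2 with hcdef
  have hc0 : (0:ℝ) < c := by linarith
  have hstep : ∀ a ∈ Finset.Icc 1 ((N-1)/2),
      (∑ m ∈ Finset.Icc (Lx N a) (N/2), 1/((a:ℝ)+(m:ℝ)*u)^4)
        ≤ 1/c^4 + (2/3) * (1/c^3) := by
    intro a ha
    have ha1 : 1 ≤ a := (Finset.mem_Icc.mp ha).1
    refine le_trans (gridV3inner N a hu0 ha1) ?_
    have hXc : c ≤ (a:ℝ) + (Lx N a:ℝ)*u := lx_half N a hu1 hu0.le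
    have hX : 0 < (a:ℝ) + (Lx N a:ℝ)*u := lt_of_lt_of_le hc0 hXc
    have k1 : 1/((a:ℝ) + (Lx N a:ℝ)*u)^4 ≤ 1/c^4 :=
      one_div_le_one_div_of_le (by positivity) (pow_le_pow_left₀ hc0.le hXc 4)
    have k2 : 1/(3*u) * (1/((a:ℝ) + (Lx N a:ℝ)*u)^3) ≤ (2/3) * (1/c^3) := by
      apply mul_le_mul
      · rw [div_le_div_iff₀ (by linarith) (by norm_num)]; linarith
      · exact one_div_le_one_div_of_le (by positivity) (pow_le_pow_left₀ hc0.le hXc 3)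
      · positivity
      · norm_num
    linarith
  refine le_trans (Finset.sum_le_sum hstep) ?_
  rw [Finset.sum_const, Nat.card_Icc, nsmul_eq_mul]
  have hcard : (((N-1)/2 + 1 - 1 : ℕ):ℝ) ≤ 2*c := by
    have h1 : ((N-1)/2 + 1 - 1)*2 ≤ N := by omega
    have h2 : (((N-1)/2 + 1 - 1 : ℕ):ℝ)*2 ≤ (N:ℝ) := by exact_mod_cast h1
    nlinarith
  have hBpos : (0:ℝ) ≤ 1/c^4 + (2/3) * (1/c^3) := by positivity
  calc (((N-1)/2 + 1 - 1 : ℕ) : ℝ) * (1/c^4 + (2/3) * (1/c^3))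
      ≤ (2*c) * (1/c^4 + (2/3) * (1/c^3)) := mul_le_mul_of_nonneg_right hcard hBpos
    _ = (2*c + (4/3)*c^2)/c^4 := by field_simp; ring
    _ ≤ 2/c^2 := by
        rw [div_le_div_iff₀ (by positivity) (by positivity)]
        nlinarith [pow_pos hc0 2, pow_pos hc0 3, pow_pos hc0 4]

/-- V3, small c -/
lemma gridV3small (N : ℕ) {u : ℝ} (hu : 1/2 ≤ u) (hu1 : u ≤ 1)
    (hc0 : 0 < (N:ℝ)*u/2) (hc : (N:ℝ)*u/2 < 3) :
    gridSum N u ≤ 2/((N:ℝ)*u/2)^2 := by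
  have hu0 : 0 < u := by linarith
  set c : ℝ := (N:ℝ)*u/2 with hcdef
  have hN11 : N ≤ 11 := by
    have h1 : (N:ℝ)*u < 6 := by linarith
    have h2 : (N:ℝ)/2 ≤ (N:ℝ)*u := by nlinarith [Nat.cast_nonneg (α := ℝ) N]
    have h3 : (N:ℝ) < 12 := by linarith
    have h4 : N < 12 := by exact_mod_cast h3
    omega
  have hA5 : (N-1)/2 ≤ 5 := by omega
  have hstep : ∀ a ∈ Finset.Icc 1 ((N-1)/2),
      (∑ m ∈ Finset.Icc (Lx N a) (N/2), 1/((a:ℝ)+(m:ℝ)*u)^4)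
        ≤ (1/((a:ℝ)+1/2)^2 + (2/3) * (1/((a:ℝ)+1/2))) * (1/c^2) := by
    intro a ha
    have ha1 : 1 ≤ a := (Finset.mem_Icc.mp ha).1
    have har : (1:ℝ) ≤ (a:ℝ) := by exact_mod_cast ha1
    refine le_trans (gridV3inner N a hu0 ha1) ?_
    have hL1 : (1:ℝ) ≤ (Lx N a : ℝ) := lx_ge_one N a
    have hXc : c ≤ (a:ℝ) + (Lx N a:ℝ)*u := lx_half N a hu1 hu0.le
    have hX1 : (a:ℝ)+1/2 ≤ (a:ℝ) + (Lx N a:ℝ)*u := by nlinarith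
    have hX : 0 < (a:ℝ) + (Lx N a:ℝ)*u := lt_of_lt_of_le hc0 hXc
    have ha2 : (0:ℝ) < (a:ℝ)+1/2 := by linarith
    have k1 : 1/((a:ℝ) + (Lx N a:ℝ)*u)^4 ≤ 1/(((a:ℝ)+1/2)^2*c^2) := by
      apply one_div_le_one_div_of_le (by positivity)
      calc ((a:ℝ)+1/2)^2*c^2 ≤ ((a:ℝ) + (Lx N a:ℝ)*u)^2 * ((a:ℝ) + (Lx N a:ℝ)*u)^2 :=
            mul_le_mul (pow_le_pow_left₀ ha2.le hX1 2) (pow_le_pow_left₀ hc0.le hXc 2)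
              (by positivity) (by positivity)
        _ = ((a:ℝ) + (Lx N a:ℝ)*u)^4 := by ring
    have k2 : 1/(3*u) * (1/((a:ℝ) + (Lx N a:ℝ)*u)^3) ≤ (2/3) * (1/(((a:ℝ)+1/2)*c^2)) := by
      apply mul_le_mul
      · rw [div_le_div_iff₀ (by linarith) (by norm_num)]; linarith
      · apply one_div_le_one_div_of_le (by positivity)
        calc ((a:ℝ)+1/2)*c^2 ≤ ((a:ℝ) + (Lx N a:ℝ)*u) * ((a:ℝ) + (Lx N a:ℝ)*u)^2 :=
              mul_le_mul hX1 (pow_le_pow_left₀ hc0.le hXc 2) (by positivity) (by positivity)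
          _ = ((a:ℝ) + (Lx N a:ℝ)*u)^3 := by ring
      · positivity
      · norm_num
    have e : (1/((a:ℝ)+1/2)^2 + (2/3) * (1/((a:ℝ)+1/2))) * (1/c^2)
        = 1/(((a:ℝ)+1/2)^2*c^2) + (2/3) * (1/(((a:ℝ)+1/2)*c^2)) := by
      field_simp
    rw [e]
    linarith
  refine le_trans (Finset.sum_le_sum hstep) ?_
  have hsub : Finset.Icc 1 ((N-1)/2) ⊆ Finset.Icc 1 5 := by
    apply Finset.Icc_subset_Icc le_rfl hA5
  have hmono := Finset.sum_le_sum_of_subset_of_nonneg hsub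
    (fun a _ _ => by positivity :
      ∀ i ∈ Finset.Icc 1 5, i ∉ Finset.Icc 1 ((N-1)/2) →
        0 ≤ (1/((i:ℝ)+1/2)^2 + (2/3) * (1/((i:ℝ)+1/2))) * (1/c^2))
  refine le_trans hmono ?_
  rw [← Finset.sum_mul]
  have hval : (∑ a ∈ (Finset.Icc 1 5 : Finset ℕ), (1/((a:ℝ)+1/2)^2 + (2/3) * (1/((a:ℝ)+1/2)))) ≤ 2 := by
    have hI : (Finset.Icc 1 5 : Finset ℕ) = {1,2,3,4,5} := by decide
    rw [hI]
    norm_num [Finset.sum_insert, Finset.mem_insert]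
  calc (∑ a ∈ (Finset.Icc 1 5 : Finset ℕ), (1/((a:ℝ)+1/2)^2 + (2/3) * (1/((a:ℝ)+1/2)))) * (1/c^2)
      ≤ 2 * (1/c^2) := mul_le_mul_of_nonneg_right hval (by positivity)
    _ = 2/c^2 := by ring


/-- For every integer `N ≥ 1` and every `ξ ∈ [0,1)`,
`Σ_{(n,m)∈Ξ_N^+} 1/(N − n − mξ)⁴ ≤ min {4, 8/(N²(1−ξ)²)}`; moreover for `ξ = 1`
the sum is still bounded by `4`. -/
theorem stmt8 (N : ℕ) (hN : 1 ≤ N) :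
    (∀ ξ ∈ Set.Ico (0 : ℝ) 1,
      (∑ p ∈ XiPlus N, 1 / ((N : ℝ) - (p.1 : ℝ) - (p.2 : ℝ) * ξ) ^ 4) ≤
        min 4 (8 / ((N : ℝ) ^ 2 * (1 - ξ) ^ 2))) ∧
    (∑ p ∈ XiPlus N, 1 / ((N : ℝ) - (p.1 : ℝ) - (p.2 : ℝ)) ^ 4) ≤ 4 := by
  have hN0 : (1:ℝ) ≤ (N:ℝ) := by exact_mod_cast hN
  constructor
  · intro ξ hξ
    obtain ⟨hξ0, hξ1⟩ := hξ
    have hu0 : 0 < 1 - ξ := by linarith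
    have hS := step1 N ξ hξ0 (by linarith)
    rw [le_min_iff]
    constructor
    · refine le_trans hS (le_trans (gridV1 N (by linarith)) (by norm_num))
    · have hc0 : 0 < (N:ℝ)*(1-ξ)/2 := by positivity
      have hrw : 8 / ((N:ℝ)^2 * (1-ξ)^2) = 2/((N:ℝ)*(1-ξ)/2)^2 := by
        rw [div_eq_div_iff (by positivity) (by positivity)]
        ring
      rw [hrw]
      by_cases hsmall : ((N:ℝ)*(1-ξ)/2)^2 ≤ 1/2
      · have h4 : (4:ℝ) ≤ 2/((N:ℝ)*(1-ξ)/2)^2 := by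
          rw [le_div_iff₀ (by positivity)]
          nlinarith
        refine le_trans hS (le_trans (gridV1 N (by linarith)) (by linarith))
      · push_neg at hsmall
        by_cases hu2 : 1 - ξ ≤ 1/2
        · -- regime u ≤ 1/2 : telescoping V2 + F4
          have hv : (1:ℝ)/2 ≤ ξ := by linarith
          have hB := gridV2 N hu0 (by linarith : 1 - ξ < 1)
          have he : (1:ℝ) - (1 - ξ) = ξ := by ring
          rw [he] at hB
          refine le_trans hS (le_trans hB ?_)
          have := F4 (c := (N:ℝ)*(1-ξ)/2) (v := ξ) hc0 hv
          linarith
        · push_neg at hu2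
          by_cases hc3 : 3 ≤ (N:ℝ)*(1-ξ)/2
          · exact le_trans hS (gridV3big N (by linarith) (by linarith) hc3)
          · push_neg at hc3
            exact le_trans hS (gridV3small N (by linarith) (by linarith) hc0 hc3)
  · have hS := step1 N 1 (by norm_num) le_rfl
    simp only [mul_one] at hS
    have he : (1:ℝ) - 1 = 0 := by norm_num
    rw [he] at hS
    refine le_trans hS (le_trans (gridV1 N le_rfl) (by norm_num))
end

section
/- For every integer ℓ, setting c_ℓ := (2ℓ+1)π/4, and for every θ ∈ [c_ℓ − π/4, c_ℓ + π/4], one has 1 − min{|tan θ|, |cot θ|} ≥ (4/π) |θ − c_ℓ|. -/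
open Real

/-- `d(θ) = min {|tan θ|, |cot θ|}`, written as
`min |sin θ| |cos θ| / max |sin θ| |cos θ|` (an identical value, which also
encodes the conventions `d(θ) = |cot θ| = 0` where `cos θ = 0` and
`d(θ) = |tan θ| = 0` where `sin θ = 0`). -/
noncomputable def dmin (θ : ℝ) : ℝ :=
  min |Real.sin θ| |Real.cos θ| / max |Real.sin θ| |Real.cos θ|

lemma dmin_periodic : Function.Periodic dmin (π / 2) := by
  intro x
  unfold dmin
  rw [Real.sin_add_pi_div_two, Real.cos_add_pi_div_two, abs_neg, min_comm, max_comm]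

lemma dmin_reflect (x : ℝ) : dmin (π / 2 - x) = dmin x := by
  unfold dmin
  rw [Real.sin_pi_div_two_sub, Real.cos_pi_div_two_sub, min_comm, max_comm]

lemma sin_lower (t : ℝ) (h0 : 0 ≤ t) (h1 : t ≤ π / 4) :
    2 * Real.sqrt 2 / π * t ≤ Real.sin t := by
  have hπ := Real.pi_pos
  have hb0 : (0:ℝ) ≤ 4 * t / π := by positivity
  have hb1 : 4 * t / π ≤ 1 := by
    rw [div_le_one hπ]; linarith
  have hm0 : (0:ℝ) ∈ Set.Icc (0:ℝ) π := ⟨le_refl 0, hπ.le⟩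
  have hm4 : (π / 4 : ℝ) ∈ Set.Icc (0:ℝ) π := ⟨by positivity, by linarith⟩
  obtain ⟨-, hc'⟩ := strictConcaveOn_sin_Icc.concaveOn
  have hc := hc' hm0 hm4 (show (0:ℝ) ≤ 1 - 4 * t / π by linarith) hb0
    (show 1 - 4 * t / π + 4 * t / π = 1 by ring)
  have ht : (1 - 4 * t / π) • (0:ℝ) + (4 * t / π) • (π / 4) = t := by
    field_simp
    simp only [smul_eq_mul, mul_zero, zero_add]; field_simp
  rw [ht] at hc
  simp only [smul_eq_mul, Real.sin_zero, mul_zero, zero_add, Real.sin_pi_div_four] at hc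
  calc 2 * Real.sqrt 2 / π * t = 4 * t / π * (Real.sqrt 2 / 2) := by ring
    _ ≤ Real.sin t := hc

lemma key_s10 (t : ℝ) (h0 : 0 ≤ t) (h1 : t ≤ π / 4) :
    4 / π * t ≤ 1 - dmin (π / 4 + t) := by
  have hπ := Real.pi_pos
  set x := π / 4 + t with hx
  have hx2 : x ≤ π / 2 := by rw [hx]; linarith
  have hs0 : 0 < Real.sin x := Real.sin_pos_of_pos_of_lt_pi (by rw [hx]; linarith)
    (by rw [hx]; linarith)
  have hc0 : 0 ≤ Real.cos x := Real.cos_nonneg_of_mem_Icc ⟨by rw [hx]; linarith, hx2⟩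
  have hsin_sub : Real.sin x - Real.cos x = Real.sqrt 2 * Real.sin t := by
    have h : Real.sin (x - π / 4) = Real.sin x * Real.cos (π/4) - Real.cos x * Real.sin (π/4) :=
      Real.sin_sub x (π/4)
    have hxt : x - π / 4 = t := by rw [hx]; ring
    rw [hxt, Real.cos_pi_div_four, Real.sin_pi_div_four] at h
    have h2 : Real.sqrt 2 * Real.sqrt 2 = 2 := Real.mul_self_sqrt (by norm_num)
    linear_combination (-Real.sqrt 2) * h - (Real.sin x - Real.cos x) / 2 * h2
  have hslow := sin_lower t h0 h1
  have hsqrt2 : (0:ℝ) < Real.sqrt 2 := by positivity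
  have h2 : Real.sqrt 2 * Real.sqrt 2 = 2 := Real.mul_self_sqrt (by norm_num)
  have hsc : Real.cos x ≤ Real.sin x := by
    nlinarith [Real.sin_nonneg_of_nonneg_of_le_pi h0 (by linarith : t ≤ π)]
  have hdmin : dmin x = Real.cos x / Real.sin x := by
    unfold dmin
    rw [abs_of_nonneg hs0.le, abs_of_nonneg hc0, min_eq_right hsc, max_eq_left hsc]
  rw [hdmin]
  have hsin1 : Real.sin x ≤ 1 := Real.sin_le_one x
  have key1 : Real.sin x - Real.cos x ≤ (1 - Real.cos x / Real.sin x) * Real.sin x := by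
    field_simp
    exact le_rfl
  have key2 : 4 / π * t ≤ Real.sin x - Real.cos x := by
    rw [hsin_sub]
    calc 4 / π * t = Real.sqrt 2 * (2 * Real.sqrt 2 / π * t) := by
          field_simp; nlinarith
      _ ≤ Real.sqrt 2 * Real.sin t := by
          exact mul_le_mul_of_nonneg_left hslow hsqrt2.le
  have hd0 : 0 ≤ 1 - Real.cos x / Real.sin x := by
    rw [sub_nonneg, div_le_one hs0]; exact hsc
  nlinarith [mul_le_mul_of_nonneg_left hsin1 hd0]

/-- For every integer `ℓ`, with `c_ℓ = (2ℓ+1)π/4`, and every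
`θ ∈ [c_ℓ − π/4, c_ℓ + π/4]`, one has
`1 − min {|tan θ|, |cot θ|} ≥ (4/π) |θ − c_ℓ|`. -/
theorem stmt10 (ℓ : ℤ) (θ : ℝ)
    (hθ : θ ∈ Set.Icc ((2 * (ℓ : ℝ) + 1) * π / 4 - π / 4)
      ((2 * (ℓ : ℝ) + 1) * π / 4 + π / 4)) :
    4 / π * |θ - (2 * (ℓ : ℝ) + 1) * π / 4| ≤ 1 - dmin θ := by
  obtain ⟨h1, h2⟩ := hθ
  set t := θ - (2 * (ℓ : ℝ) + 1) * π / 4 with ht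
  have hθeq : θ = (π / 4 + t) + (ℓ : ℝ) * (π / 2) := by rw [ht]; ring
  have hper : dmin θ = dmin (π / 4 + t) := by
    rw [hθeq]
    exact (dmin_periodic.int_mul ℓ) (π / 4 + t)
  have habs : dmin (π / 4 + t) = dmin (π / 4 + |t|) := by
    rcases abs_cases t with ⟨h, _⟩ | ⟨h, _⟩
    · rw [h]
    · rw [h]
      have : π / 4 + -t = π / 2 - (π / 4 + t) := by ring
      rw [this, dmin_reflect]
  have h0 : 0 ≤ |t| := abs_nonneg t
  have h4 : |t| ≤ π / 4 := abs_le.mpr ⟨by linarith, by linarith⟩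
  rw [hper, habs]
  exact key_s10 |t| h0 h4
end
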